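/- arXiv:2310.14995 — 7 statements merged into one kernel-verified Lean document; each statement's English description precedes it below -/
import Mathlib

section
/- Let γ ∈ 𝔻 and define w, v ∈ ℝ by w - iv = 2γ/(1-γ), and w^ι, v^ι by w^ι - iv^ι = 2γ^ι/(1-γ^ι) with γ^ι = -γ(1-γ̄)/(1-γ). Then 1 + w^ι = 1/(1+w) and v^ι/(2+w^ι) = -v/(2+w). -/
open Complex

/-- The involution `γ ↦ γ^ι = -γ(1-γ̄)/(1-γ)`. -/
noncomputable def diskIota (γ : ℂ) : ℂ := -γ * (1 - starRingEnd ℂ γ) / (1 - γ)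

/-- if `w - iv = 2γ/(1-γ)` and `w^ι - iv^ι = 2γ^ι/(1-γ^ι)` with
`γ` in the open unit disk, then `1 + w^ι = 1/(1+w)` and `v^ι/(2+w^ι) = -v/(2+w)`. -/
theorem iota_wv_identities (γ : ℂ) (hγ : ‖γ‖ < 1)
    (w v wι vι : ℝ)
    (hwv : (w : ℂ) - Complex.I * v = 2 * γ / (1 - γ))
    (hwvι : (wι : ℂ) - Complex.I * vι = 2 * diskIota γ / (1 - diskIota γ)) :
    1 + wι = (1 + w)⁻¹ ∧ vι / (2 + wι) = -(v / (2 + w)) := by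
  set a := γ.re with ha
  set b := γ.im with hb
  have h1 : a^2 + b^2 < 1 := by
    have := Complex.sq_norm γ
    nlinarith [norm_nonneg γ, Complex.normSq_apply γ]
  have hne : (1:ℂ) - γ ≠ 0 := by
    intro h
    have : γ = 1 := by linear_combination -h
    rw [this] at hγ; simp at hγ
  have hs : (0:ℝ) < 1 - (a^2+b^2) := by linarith
  have hd : (0:ℝ) < (1-a)^2 + b^2 := by nlinarith
  have h1a : (0:ℝ) < 1 - a := by nlinarith
  rw [eq_div_iff hne] at hwv
  have E1 : w*(1-a) - v*b = 2*a := by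
    have := congrArg Complex.re hwv
    simp [Complex.ext_iff, Complex.mul_re, Complex.mul_im] at this
    linarith
  have E2 : -(w*b) - v*(1-a) = 2*b := by
    have := congrArg Complex.im hwv
    simp [Complex.ext_iff, Complex.mul_re, Complex.mul_im] at this
    linarith
  have hconj : (starRingEnd ℂ) γ = (a : ℂ) - b * I := by
    rw [Complex.ext_iff]; simp; exact ⟨rfl, rfl⟩
  have hγeq : γ = (a : ℂ) + b * I := by rw [Complex.ext_iff]; simp; exact ⟨rfl, rfl⟩
  have hι : 1 - diskIota γ = ((1 - (a^2+b^2) : ℝ) : ℂ) / (1 - γ) := by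
    rw [diskIota]
    field_simp
    rw [hconj, hγeq]
    ring_nf
    simp [Complex.I_sq]
    ring_nf
  have hsC : ((1-(a^2+b^2):ℝ):ℂ) ≠ 0 := by
    exact_mod_cast ne_of_gt hs
  have h3 : ((wι:ℂ) - I*vι) * ((1-(a^2+b^2):ℝ):ℂ) = -2*γ*(1 - starRingEnd ℂ γ) := by
    rw [← eq_div_iff hsC, hwvι, hι, diskIota, mul_div_assoc', div_div_div_comm,
      div_self hne, div_one]
    congr 1
    ring
  rw [hconj, hγeq] at h3
  have E3 : wι*(1-(a^2+b^2)) = -2*a + 2*a^2 + 2*b^2 := by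
    have := congrArg Complex.re h3
    simp [Complex.ext_iff, pow_two, Complex.mul_re, Complex.mul_im] at this
    nlinarith [this, sq_nonneg a, sq_nonneg b]
  have E4 : vι*(1-(a^2+b^2)) = 2*b := by
    have := congrArg Complex.im h3
    simp [Complex.ext_iff, pow_two, Complex.mul_re, Complex.mul_im] at this
    nlinarith [this, sq_nonneg a, sq_nonneg b]
  have Ew : w*((1-a)^2+b^2) = 2*a - 2*(a^2+b^2) := by
    linear_combination (1-a)*E1 - b*E2
  have Ev : v*((1-a)^2+b^2) = -2*b := by
    linear_combination (-b)*E1 - (1-a)*E2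
  have hdne := ne_of_gt hd
  have hsne := ne_of_gt hs
  have hwval : w = (2*a - 2*(a^2+b^2))/((1-a)^2+b^2) := by
    rw [eq_div_iff hdne]; linear_combination Ew
  have hvval : v = (-2*b)/((1-a)^2+b^2) := by
    rw [eq_div_iff hdne]; linear_combination Ev
  have hwιval : wι = (-2*a + 2*a^2 + 2*b^2)/(1-(a^2+b^2)) := by
    rw [eq_div_iff hsne]; linear_combination E3
  have hvιval : vι = (2*b)/(1-(a^2+b^2)) := by
    rw [eq_div_iff hsne]; linear_combination E4
  constructor
  · have key : (1 + wι) * (1 + w) = 1 := by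
      rw [hwval, hwιval]
      field_simp
      ring
    exact eq_inv_of_mul_eq_one_left key
  · have h2wι : 2 + wι = (2-2*a)/(1-(a^2+b^2)) := by
      rw [hwιval, eq_div_iff hsne, add_mul, div_mul_cancel₀ _ hsne]; ring
    have h2w : 2 + w = (2-2*a)/((1-a)^2+b^2) := by
      rw [hwval, eq_div_iff hdne, add_mul, div_mul_cancel₀ _ hdne]; ring
    have h2a : (2:ℝ) - 2*a ≠ 0 := by intro h; nlinarith
    rw [h2wι, h2w, hvval, hvιval]
    field_simp
end

section
/- With the modified Verblunsky relation γ_k = ᾱ_k ∏_{j=0}^{k-1} (1-γ̄_j)/(1-γ_j), one has α_0 = γ̄_0 and, for k ≥ 1, -α_k/α_{k-1} = γ̄_k / conj(γ_{k-1}^ι), where γ^ι = -γ(1-γ̄)/(1-γ), provided all quantities are nonzero. -/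
open Complex Finset

/-- with `γ_k = ᾱ_k ∏_{j<k} (1-γ̄_j)/(1-γ_j)` one has `α_0 = γ̄_0`
and, for `k ≥ 1`, `-α_k/α_{k-1} = γ̄_k / conj(γ_{k-1}^ι)`, provided all
quantities involved are nonzero. -/
theorem alpha_ratio_iota (α γ : ℕ → ℂ)
    (hγ : ∀ k, γ k = starRingEnd ℂ (α k) *
      ∏ j ∈ Finset.range k, (1 - starRingEnd ℂ (γ j)) / (1 - γ j))
    (hαne : ∀ k, α k ≠ 0)
    (hγne : ∀ k, γ k ≠ 0)
    (h1γ : ∀ k, 1 - γ k ≠ 0)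
    (h1γc : ∀ k, 1 - starRingEnd ℂ (γ k) ≠ 0) :
    α 0 = starRingEnd ℂ (γ 0) ∧
    ∀ k, 1 ≤ k →
      -(α k / α (k - 1)) = starRingEnd ℂ (γ k) / starRingEnd ℂ (diskIota (γ (k - 1))) := by
  have hα : ∀ k, α k = starRingEnd ℂ (γ k) *
      ∏ j ∈ Finset.range k, (1 - starRingEnd ℂ (γ j)) / (1 - γ j) := by
    intro k
    have h := congrArg (starRingEnd ℂ) (hγ k)
    simp only [map_mul, map_prod, map_div₀, map_sub, map_one, Complex.conj_conj] at h
    rw [h, mul_assoc, ← Finset.prod_mul_distrib]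
    have hone : ∀ j ∈ Finset.range k,
        (1 - γ j) / (1 - starRingEnd ℂ (γ j)) *
          ((1 - starRingEnd ℂ (γ j)) / (1 - γ j)) = 1 := by
      intro j _
      rw [div_mul_div_comm, mul_comm (1 - γ j)]
      exact div_self (mul_ne_zero (h1γc j) (h1γ j))
    rw [Finset.prod_congr rfl hone, Finset.prod_const_one, mul_one]
  constructor
  · simpa using hα 0
  · intro k hk
    obtain ⟨m, rfl⟩ : ∃ m, k = m + 1 := ⟨k - 1, (Nat.succ_pred_eq_of_pos hk).symm⟩
    simp only [Nat.add_sub_cancel]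
    set P := ∏ j ∈ Finset.range m, (1 - starRingEnd ℂ (γ j)) / (1 - γ j) with hP
    have hPne : P ≠ 0 :=
      Finset.prod_ne_zero_iff.mpr fun j _ => div_ne_zero (h1γc j) (h1γ j)
    have hγmc : starRingEnd ℂ (γ m) ≠ 0 := by
      simpa using (map_ne_zero (starRingEnd ℂ)).mpr (hγne m)
    rw [hα (m + 1), hα m, Finset.prod_range_succ, ← hP]
    rw [show starRingEnd ℂ (γ (m + 1)) *
        (P * ((1 - starRingEnd ℂ (γ m)) / (1 - γ m))) =
        starRingEnd ℂ (γ (m + 1)) * ((1 - starRingEnd ℂ (γ m)) / (1 - γ m)) * P by ring,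
      show starRingEnd ℂ (γ m) * P = starRingEnd ℂ (γ m) * P from rfl,
      mul_div_mul_right _ _ hPne]
    simp only [diskIota, map_div₀, map_mul, map_neg, map_sub, map_one, Complex.conj_conj]
    field_simp
end

section
/- Let R(t) = Xᵀ(t)X(t)/(2 det X(t)) with X(t) = [[1, -x(t)],[0, y(t)]] for a path x+iy into the upper half plane, and suppose the Dirac operator τ f = R^{-1} J f' with boundary vectors 𝔲_0, 𝔲_1 ∈ ℝ² satisfying 𝔲_0ᵀ J 𝔲_1 = 1 is invertible. Then the integral kernel K(s,t) = 𝔲_0 𝔲_1ᵀ 1_{s<t} R(t) + 𝔲_1 𝔲_0ᵀ 1_{s≥t} R(t) defines a right inverse of τ on smooth compactly supported test functions: i.e., for f continuous, the function u(s) = ∫_I K(s,t) f(t) dt satisfies R^{-1}(s) J u'(s) = f(s) almost everywhere. -/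
open Matrix MeasureTheory

section Aux

open Metric Filter Set
open scoped Topology

lemma aux_ae_hasDerivAt {E : Type*} [NormedAddCommGroup E] [NormedSpace ℝ E]
    [CompleteSpace E] (g : ℝ → E) (hg : Integrable g volume) (q : ℝ) :
    ∀ᵐ s ∂(volume : Measure ℝ),
      HasDerivAt (fun w => ∫ t in q..w, g t) (g s) s := by
  filter_upwards [IsUnifLocDoublingMeasure.ae_tendsto_average_norm_sub (μ := volume)
    (hg.locallyIntegrable) 1] with s hs
  have havg : Tendsto (fun d : ℝ => ⨍ y in closedBall s d, ‖g y - g s‖) (𝓝[>] 0) (𝓝 0) := by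
    refine hs (fun _ => s) id tendsto_id ?_
    filter_upwards [self_mem_nhdsWithin] with d hd
    exact mem_closedBall_self (by simp at hd ⊢; linarith)
  rw [hasDerivAt_iff_tendsto]
  have key : ∀ x' : ℝ, x' ≠ s →
      ‖x' - s‖⁻¹ * ‖(∫ t in q..x', g t) - (∫ t in q..s, g t) - (x' - s) • g s‖
        ≤ 2 * ⨍ y in closedBall s |x' - s|, ‖g y - g s‖ := by
    intro x' hx'
    have hii : ∀ a b : ℝ, IntervalIntegrable g volume a b := fun a b => hg.intervalIntegrable
    have h1 : (∫ t in q..x', g t) - (∫ t in q..s, g t) = ∫ t in s..x', g t :=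
      intervalIntegral.integral_interval_sub_left (hii q x') (hii q s)
    have h2 : (∫ t in s..x', g t) - (x' - s) • g s = ∫ t in s..x', (g t - g s) := by
      rw [intervalIntegral.integral_sub (hii s x') (intervalIntegrable_const),
        intervalIntegral.integral_const]
    rw [h1, h2]
    have hsub : Set.uIoc s x' ⊆ closedBall s |x' - s| := by
      intro t ht
      rw [Set.mem_uIoc] at ht
      rw [Real.closedBall_eq_Icc, Set.mem_Icc]
      have h3 := le_abs_self (x' - s)
      have h4 := neg_abs_le (x' - s)
      rcases ht with ⟨h, h'⟩ | ⟨h, h'⟩ <;> constructor <;> linarith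
    have hnorm : ‖∫ t in s..x', (g t - g s)‖ ≤ ∫ y in closedBall s |x' - s|, ‖g y - g s‖ := by
      refine le_trans (intervalIntegral.norm_integral_le_integral_norm_uIoc) ?_
      refine setIntegral_mono_set
        ((hg.integrableOn.sub (integrableOn_const measure_closedBall_lt_top.ne)).norm)
        ?_ ?_
      · exact Eventually.of_forall fun y => norm_nonneg _
      · exact HasSubset.Subset.eventuallyLE hsub
    have hvol : (volume (closedBall s |x' - s|)).toReal = 2 * |x' - s| := by
      rw [Real.volume_closedBall, ENNReal.toReal_ofReal (by positivity)]
    rw [setAverage_eq, measureReal_def, hvol, smul_eq_mul]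
    have habs : (0:ℝ) < |x' - s| := abs_pos.mpr (sub_ne_zero.mpr hx')
    have hnn : (0:ℝ) ≤ ∫ y in closedBall s |x' - s|, ‖g y - g s‖ :=
      setIntegral_nonneg measurableSet_closedBall (fun y _ => norm_nonneg _)
    rw [Real.norm_eq_abs]
    calc |x' - s|⁻¹ * ‖∫ t in s..x', (g t - g s)‖
        ≤ |x' - s|⁻¹ * ∫ y in closedBall s |x' - s|, ‖g y - g s‖ := by
          exact mul_le_mul_of_nonneg_left hnorm (by positivity)
      _ = 2 * ((2 * |x' - s|)⁻¹ * ∫ y in closedBall s |x' - s|, ‖g y - g s‖) := by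
          field_simp
  have hpunct : Tendsto
      (fun x' => ‖x' - s‖⁻¹ * ‖(∫ t in q..x', g t) - (∫ t in q..s, g t) - (x' - s) • g s‖)
      (𝓝[≠] s) (𝓝 0) := by
    have h1 : Tendsto (fun x' : ℝ => |x' - s|) (𝓝[≠] s) (𝓝[>] 0) := by
      rw [tendsto_nhdsWithin_iff]
      constructor
      · have : Tendsto (fun x' : ℝ => |x' - s|) (𝓝 s) (𝓝 |s - s|) :=
          ((continuous_id.sub continuous_const).abs).continuousAt
        simpa using this.mono_left nhdsWithin_le_nhds
      · filter_upwards [self_mem_nhdsWithin] with x' hx'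
        exact abs_pos.mpr (sub_ne_zero.mpr hx')
    have h2 : Tendsto (fun x' : ℝ => 2 * ⨍ y in closedBall s |x' - s|, ‖g y - g s‖)
        (𝓝[≠] s) (𝓝 0) := by
      have := (havg.comp h1).const_mul (2:ℝ)
      simpa using this
    refine squeeze_zero' ?_ ?_ h2
    · exact Eventually.of_forall fun x' => by positivity
    · filter_upwards [self_mem_nhdsWithin] with x' hx'
      exact key x' hx'
  have hpure : Tendsto
      (fun x' => ‖x' - s‖⁻¹ * ‖(∫ t in q..x', g t) - (∫ t in q..s, g t) - (x' - s) • g s‖)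
      (pure s) (𝓝 0) := by
    have heq : ‖s - s‖⁻¹ * ‖(∫ t in q..s, g t) - (∫ t in q..s, g t) - (s - s) • g s‖ = 0 := by
      simp
    rw [tendsto_pure_left]
    intro U hU
    simpa [heq] using mem_of_mem_nhds hU
  have := hpunct.sup hpure
  rwa [nhdsNE_sup_pure] at this

end Aux

/-- The weight function `R = XᵀX/(2 det X)` built out of a path `x + iy` in the
upper half plane, where `X = [[1,-x],[0,y]]`. -/
noncomputable def diracWeight (x y : ℝ → ℝ) (t : ℝ) : Matrix (Fin 2) (Fin 2) ℝ :=
  (2 * (!![1, -x t; 0, y t] : Matrix (Fin 2) (Fin 2) ℝ).det)⁻¹ •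
    ((!![1, -x t; 0, y t] : Matrix (Fin 2) (Fin 2) ℝ)ᵀ * !![1, -x t; 0, y t])

/-- The integral kernel `K(s,t) = (𝔲₀𝔲₁ᵀ 1_{s<t} + 𝔲₁𝔲₀ᵀ 1_{s≥t}) R(t)` of `τ⁻¹`. -/
noncomputable def diracKernel (x y : ℝ → ℝ) (u0 u1 : Fin 2 → ℝ) (s t : ℝ) :
    Matrix (Fin 2) (Fin 2) ℝ :=
  (if s < t then vecMulVec u0 u1 else vecMulVec u1 u0) * diracWeight x y t

lemma aux_det_diracWeight (x y : ℝ → ℝ) (t : ℝ) (hyt : 0 < y t) :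
    (diracWeight x y t).det = 1/4 := by
  have hdetX : (!![1, -x t; 0, y t] : Matrix (Fin 2) (Fin 2) ℝ).det = y t := by
    rw [Matrix.det_fin_two_of]; ring
  rw [diracWeight, Matrix.det_smul, Matrix.det_mul, Matrix.det_transpose, hdetX]
  have : y t ≠ 0 := ne_of_gt hyt
  simp only [Fintype.card_fin]
  field_simp
  ring

lemma aux_weight_inv (x y : ℝ → ℝ) (t : ℝ) (hyt : 0 < y t) (v : Fin 2 → ℝ) :
    (diracWeight x y t)⁻¹ *ᵥ (diracWeight x y t *ᵥ v) = v := by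
  rw [Matrix.mulVec_mulVec, Matrix.nonsing_inv_mul _ ?_, Matrix.one_mulVec]
  rw [aux_det_diracWeight x y t hyt]
  norm_num

lemma aux_BA (u0 u1 : Fin 2 → ℝ)
    (hnorm : u0 ⬝ᵥ ((!![0, -1; 1, 0] : Matrix (Fin 2) (Fin 2) ℝ) *ᵥ u1) = 1) :
    vecMulVec u1 u0 - vecMulVec u0 u1 = !![0, 1; -1, 0] := by
  simp [dotProduct, Matrix.mulVec, Fin.sum_univ_two, Matrix.vecHead, Matrix.vecTail] at hnorm
  ext i j
  fin_cases i <;> fin_cases j <;>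
    simp [Matrix.vecMulVec_apply, Matrix.sub_apply] <;> linarith

lemma aux_JBA :
    (!![0, -1; 1, 0] : Matrix (Fin 2) (Fin 2) ℝ) * !![0, 1; -1, 0] = 1 := by
  norm_num [Matrix.mul_fin_two]
  exact Matrix.one_fin_two.symm

/-- the kernel `K(s,t)` gives a right inverse of the Dirac operator
`τ f = R⁻¹ J f'`: for continuous `f`, the function `u(s) = ∫_I K(s,t) f(t) dt`
satisfies `R(s)⁻¹ J u'(s) = f(s)` almost everywhere on `I`. -/
theorem dirac_kernel_right_inverse
    (I : Set ℝ) (hI : I = Set.Ico (0 : ℝ) 1 ∨ I = Set.Ioc (0 : ℝ) 1)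
    (x y : ℝ → ℝ) (hx : Measurable x) (hy : Measurable y)
    (hypos : ∀ t ∈ I, 0 < y t)
    (u0 u1 : Fin 2 → ℝ) (hu0 : u0 ≠ 0) (hu1 : u1 ≠ 0)
    (hnorm : u0 ⬝ᵥ ((!![0, -1; 1, 0] : Matrix (Fin 2) (Fin 2) ℝ) *ᵥ u1) = 1)
    -- integrability conditions (Assumption 1 of the paper)
    (hHS : ∫⁻ t in I, ∫⁻ s in I ∩ Set.Iic t,
        ENNReal.ofReal ((u0 ⬝ᵥ (diracWeight x y s *ᵥ u0)) *
          (u1 ⬝ᵥ (diracWeight x y t *ᵥ u1))) < ⊤)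
    (hbdy : IntegrableOn (fun s => ‖diracWeight x y s *ᵥ u1‖) I volume ∨
      IntegrableOn (fun s => ‖diracWeight x y s *ᵥ u0‖) I volume)
    (f : ℝ → Fin 2 → ℝ) (hf : Continuous f)
    (hInt : ∀ s ∈ I, IntegrableOn (fun t => diracKernel x y u0 u1 s t *ᵥ f t) I volume) :
    ∀ᵐ s ∂(volume.restrict I),
      ∃ u' : Fin 2 → ℝ,
        HasDerivAt (fun s' => ∫ t in I, diracKernel x y u0 u1 s' t *ᵥ f t) u' s ∧
        (diracWeight x y s)⁻¹ *ᵥ ((!![0, -1; 1, 0] : Matrix (Fin 2) (Fin 2) ℝ) *ᵥ u') = f s := by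
  set A := vecMulVec u0 u1 with hA
  set B := vecMulVec u1 u0 with hB
  have hIoo : Set.Ioo (0:ℝ) 1 ⊆ I := by
    rcases hI with h | h <;> rw [h] <;> intro t ht
    · exact ⟨ht.1.le, ht.2⟩
    · exact ⟨ht.1, ht.2.le⟩
  have hImeas : MeasurableSet I := by
    rcases hI with h | h <;> rw [h]
    · exact measurableSet_Ico
    · exact measurableSet_Ioc
  have hBA : B - A = !![0, 1; -1, 0] := aux_BA u0 u1 hnorm
  -- the key pointwise statement on each rational interval
  have key : ∀ q r : ℝ, 0 < q → q < r → r < 1 →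
      ∀ᵐ s ∂(volume : Measure ℝ), s ∈ Set.Ioo q r →
      ∃ u' : Fin 2 → ℝ,
        HasDerivAt (fun s' => ∫ t in I, diracKernel x y u0 u1 s' t *ᵥ f t) u' s ∧
        (diracWeight x y s)⁻¹ *ᵥ ((!![0, -1; 1, 0] : Matrix (Fin 2) (Fin 2) ℝ) *ᵥ u') = f s := by
    intro q r hq0 hqr hr1
    have hqI : q ∈ I := hIoo ⟨hq0, hqr.trans hr1⟩
    have hrI : r ∈ I := hIoo ⟨hq0.trans hqr, hr1⟩
    set h : ℝ → Fin 2 → ℝ := fun t => ((B - A) * diracWeight x y t) *ᵥ f t with hh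
    set g : ℝ → Fin 2 → ℝ := (Set.Ioc q r).indicator h with hg
    have hIocI : Set.Ioc q r ⊆ I := fun t ht =>
      hIoo ⟨hq0.trans ht.1, lt_of_le_of_lt ht.2 hr1⟩
    have hgint : Integrable g volume := by
      rw [hg, integrable_indicator_iff measurableSet_Ioc]
      have h1 : IntegrableOn (fun t => diracKernel x y u0 u1 r t *ᵥ f t)
          (Set.Ioc q r) volume := (hInt r hrI).mono_set hIocI
      have h2 : IntegrableOn (fun t => diracKernel x y u0 u1 q t *ᵥ f t)
          (Set.Ioc q r) volume := (hInt q hqI).mono_set hIocI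
      refine IntegrableOn.congr_fun (h1.sub h2) ?_ measurableSet_Ioc
      intro t ht
      show diracKernel x y u0 u1 r t *ᵥ f t - diracKernel x y u0 u1 q t *ᵥ f t = h t
      simp only [diracKernel, ← hA, ← hB]
      rw [if_neg (not_lt.mpr ht.2), if_pos ht.1, ← Matrix.sub_mulVec, ← Matrix.sub_mul]
    filter_upwards [aux_ae_hasDerivAt g hgint q] with s hds hs
    have hsI : s ∈ I := hIoo ⟨hq0.trans hs.1, hs.2.trans hr1⟩
    have hFeq : ∀ s' ∈ Set.Ioo q r,
        (∫ t in I, diracKernel x y u0 u1 s' t *ᵥ f t)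
          = (∫ t in I, diracKernel x y u0 u1 q t *ᵥ f t) + ∫ t in q..s', g t := by
      intro s' hs'
      have hs'I : s' ∈ I := hIoo ⟨hq0.trans hs'.1, hs'.2.trans hr1⟩
      have hsub1 : (∫ t in q..s', g t) = ∫ t in Set.Ioc q s', h t := by
        rw [intervalIntegral.integral_of_le hs'.1.le, hg,
          setIntegral_indicator measurableSet_Ioc,
          Set.inter_eq_left.mpr (Set.Ioc_subset_Ioc_right hs'.2.le)]
      have heq : Set.EqOn
          (fun t => diracKernel x y u0 u1 s' t *ᵥ f t - diracKernel x y u0 u1 q t *ᵥ f t)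
          (Set.indicator (Set.Ioc q s') h) I := by
        intro t htI
        by_cases h1 : s' < t
        · have h2 : q < t := lt_trans hs'.1 h1
          have hnm : t ∉ Set.Ioc q s' := fun hmem => absurd hmem.2 (not_le.mpr h1)
          simp only [diracKernel, if_pos h1, if_pos (lt_trans hs'.1 h1),
            Set.indicator_of_notMem hnm, sub_self]
        · by_cases h2 : q < t
          · have hmem : t ∈ Set.Ioc q s' := ⟨h2, not_lt.mp h1⟩
            simp only [diracKernel, if_neg h1, if_pos h2, Set.indicator_of_mem hmem, hh,
              ← hA, ← hB]
            rw [← Matrix.sub_mulVec, ← Matrix.sub_mul]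
          · have hnm : t ∉ Set.Ioc q s' := fun hmem => absurd hmem.1 h2
            have h1' : ¬ s' < t := h1
            simp only [diracKernel, if_neg h1', if_neg h2,
              Set.indicator_of_notMem hnm, sub_self]
      have hdiff : (∫ t in I, diracKernel x y u0 u1 s' t *ᵥ f t)
          - (∫ t in I, diracKernel x y u0 u1 q t *ᵥ f t) = ∫ t in Set.Ioc q s', h t := by
        rw [← integral_sub (hInt s' hs'I) (hInt q hqI), setIntegral_congr_fun hImeas heq,
          setIntegral_indicator measurableSet_Ioc,
          Set.inter_eq_right.mpr (fun t ht => hIoo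
            ⟨hq0.trans ht.1, lt_of_le_of_lt ht.2 (hs'.2.trans hr1)⟩)]
      rw [hsub1]
      exact sub_eq_iff_eq_add'.mp hdiff
    have hg_eq : g s = ((B - A) * diracWeight x y s) *ᵥ f s :=
      Set.indicator_of_mem (Set.mem_Ioc.mpr ⟨hs.1, hs.2.le⟩) h
    refine ⟨g s, ?_, ?_⟩
    · have hder := hds.const_add (∫ t in I, diracKernel x y u0 u1 q t *ᵥ f t)
      refine HasDerivAt.congr_of_eventuallyEq hder ?_
      filter_upwards [Ioo_mem_nhds hs.1 hs.2] with w hw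
      exact hFeq w hw
    · have step : (!![0, -1; 1, 0] : Matrix (Fin 2) (Fin 2) ℝ) *ᵥ
          (((B - A) * diracWeight x y s) *ᵥ f s) = diracWeight x y s *ᵥ f s := by
        rw [Matrix.mulVec_mulVec, ← Matrix.mul_assoc, hBA, aux_JBA, Matrix.one_mul]
      rw [hg_eq, step]
      exact aux_weight_inv x y s (hypos s hsI) (f s)
  -- glue over rational intervals
  have all : ∀ᵐ s ∂(volume : Measure ℝ), ∀ q r : ℚ,
      0 < (q:ℝ) → (q:ℝ) < r → (r:ℝ) < 1 → s ∈ Set.Ioo (q:ℝ) (r:ℝ) →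
      ∃ u' : Fin 2 → ℝ,
        HasDerivAt (fun s' => ∫ t in I, diracKernel x y u0 u1 s' t *ᵥ f t) u' s ∧
        (diracWeight x y s)⁻¹ *ᵥ ((!![0, -1; 1, 0] : Matrix (Fin 2) (Fin 2) ℝ) *ᵥ u') = f s := by
    rw [MeasureTheory.ae_all_iff]
    intro q
    rw [MeasureTheory.ae_all_iff]
    intro r
    by_cases hcond : 0 < (q:ℝ) ∧ (q:ℝ) < r ∧ (r:ℝ) < 1
    · filter_upwards [key q r hcond.1 hcond.2.1 hcond.2.2] with s hs h1 h2 h3 h4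
      exact hs h4
    · refine Filter.Eventually.of_forall fun s h1 h2 h3 h4 => absurd ⟨h1, h2, h3⟩ hcond
  have hres : volume.restrict I = volume.restrict (Set.Ioo (0:ℝ) 1) := by
    refine Measure.restrict_congr_set ?_
    rcases hI with h | h <;> rw [h]
    · exact (Ioo_ae_eq_Ico).symm
    · exact (Ioo_ae_eq_Ioc).symm
  have hae : Set.Ioo (0:ℝ) 1 =ᵐ[volume] I := by
    rcases hI with h | h <;> rw [h]
    · exact Ioo_ae_eq_Ico
    · exact Ioo_ae_eq_Ioc
  refine ae_restrict_of_ae_eq_of_ae_restrict hae ?_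
  rw [ae_restrict_iff' measurableSet_Ioo]
  filter_upwards [all] with s hall hs
  obtain ⟨q, hq0, hqs⟩ := exists_rat_btwn hs.1
  obtain ⟨r, hsr, hr1⟩ := exists_rat_btwn hs.2
  exact hall q r hq0 (hqs.trans hsr) hr1 ⟨hqs, hsr⟩
end

section
/- Under the setup of the Dirac operator τ = Dir(R, 𝔲_0, 𝔲_1) with kernel K_{τ^{-1}}(s,t) = (𝔲_0𝔲_1ᵀ1_{s<t} + 𝔲_1𝔲_0ᵀ1_{s≥t})R(t), the squared Hilbert–Schmidt norm of τ^{-1} equals 2∫_0^1 ∫_0^t (𝔲_0ᵀ R(s) 𝔲_0)(𝔲_1ᵀ R(t) 𝔲_1) ds dt. -/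
open Matrix MeasureTheory

/-- `𝔞_j(s) = X(s)𝔲_j/√(det X(s))`. -/
noncomputable def diracA (x y : ℝ → ℝ) (u : Fin 2 → ℝ) (s : ℝ) : Fin 2 → ℝ :=
  (Real.sqrt ((!![1, -x s; 0, y s] : Matrix (Fin 2) (Fin 2) ℝ).det))⁻¹ •
    ((!![1, -x s; 0, y s] : Matrix (Fin 2) (Fin 2) ℝ) *ᵥ u)

/-- The kernel of the conjugated inverse `r τ`,
`K(s,t) = ½(𝔞₀(s)𝔞₁(t)ᵀ 1_{s<t} + 𝔞₁(s)𝔞₀(t)ᵀ 1_{s≥t})`. -/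
noncomputable def diracResKernel (x y : ℝ → ℝ) (u0 u1 : Fin 2 → ℝ) (s t : ℝ) :
    Matrix (Fin 2) (Fin 2) ℝ :=
  (2 : ℝ)⁻¹ • (if s < t then vecMulVec (diracA x y u0 s) (diracA x y u1 t)
    else vecMulVec (diracA x y u1 s) (diracA x y u0 t))

lemma tr2 (a b c d : ℝ) : (!![a,b;c,d])ᵀ = !![a,c;b,d] := by
  ext i j; fin_cases i <;> fin_cases j <;> simp

lemma gfun_eq (x y : ℝ → ℝ) (u : Fin 2 → ℝ) (t : ℝ) :
    u ⬝ᵥ (diracWeight x y t *ᵥ u)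
      = (2 * y t)⁻¹ * ((u 0 - x t * u 1)^2 + (y t * u 1)^2) := by
  unfold diracWeight
  rw [tr2]
  simp [Matrix.det_fin_two_of, mulVec, dotProduct, Fin.sum_univ_two,
    Matrix.mul_apply, Matrix.smul_apply]
  ring

lemma sumA (x y : ℝ → ℝ) (u : Fin 2 → ℝ) (s : ℝ) (hs : 0 < y s) :
    ∑ i : Fin 2, (diracA x y u s i)^2
      = (y s)⁻¹ * ((u 0 - x s * u 1)^2 + (y s * u 1)^2) := by
  have h : Real.sqrt (y s) ^ 2 = y s := Real.sq_sqrt hs.le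
  simp [diracA, Matrix.det_fin_two_of, mulVec, dotProduct, Fin.sum_univ_two]
  rw [← h]
  have hr : Real.sqrt (y s) ≠ 0 := by positivity
  field_simp
  rw [Real.sqrt_sq (Real.sqrt_nonneg _)]
  ring

lemma sumK (x y : ℝ → ℝ) (u v : Fin 2 → ℝ) (s t : ℝ) (hs : 0 < y s) (ht : 0 < y t) :
    ∑ i : Fin 2, ∑ j : Fin 2,
        (((2 : ℝ)⁻¹ • vecMulVec (diracA x y u s) (diracA x y v t)) i j) ^ 2
      = (u ⬝ᵥ (diracWeight x y s *ᵥ u)) * (v ⬝ᵥ (diracWeight x y t *ᵥ v)) := by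
  have h1 := sumA x y u s hs
  have h2 := sumA x y v t ht
  rw [gfun_eq, gfun_eq]
  have key : ∑ i : Fin 2, ∑ j : Fin 2,
      (((2 : ℝ)⁻¹ • vecMulVec (diracA x y u s) (diracA x y v t)) i j) ^ 2
      = 4⁻¹ * (∑ i : Fin 2, (diracA x y u s i)^2) * (∑ j : Fin 2, (diracA x y v t j)^2) := by
    simp only [Matrix.smul_apply, vecMulVec_apply, smul_eq_mul, Fin.sum_univ_two]
    ring
  rw [key, h1, h2]
  simp only [mul_inv]
  ring_nf

/-- the squared Hilbert–Schmidt norm of `τ⁻¹` (computed as the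
double integral of the squared Frobenius norm of the kernel of the conjugated
operator `r τ`, which has the same HS norm) equals
`2∫₀¹∫₀ᵗ (𝔲₀ᵀ R(s) 𝔲₀)(𝔲₁ᵀ R(t) 𝔲₁) ds dt`. -/
theorem dirac_inverse_HS_norm
    (I : Set ℝ) (hI : I = Set.Ico (0 : ℝ) 1 ∨ I = Set.Ioc (0 : ℝ) 1)
    (x y : ℝ → ℝ) (hx : Measurable x) (hy : Measurable y)
    (hypos : ∀ t ∈ I, 0 < y t)
    (u0 u1 : Fin 2 → ℝ)
    (hnorm : u0 ⬝ᵥ ((!![0, -1; 1, 0] : Matrix (Fin 2) (Fin 2) ℝ) *ᵥ u1) = 1) :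
    ∫⁻ s in I, ∫⁻ t in I,
        ENNReal.ofReal (∑ i : Fin 2, ∑ j : Fin 2, (diracResKernel x y u0 u1 s t i j) ^ 2)
      = 2 * ∫⁻ t in I, ∫⁻ s in I ∩ Set.Iio t,
          ENNReal.ofReal ((u0 ⬝ᵥ (diracWeight x y s *ᵥ u0)) *
            (u1 ⬝ᵥ (diracWeight x y t *ᵥ u1))) := by
  classical
  have hIm : MeasurableSet I := by
    rcases hI with h | h <;> rw [h]
    · exact measurableSet_Ico
    · exact measurableSet_Ioc
  set g0 : ℝ → ℝ := fun t => u0 ⬝ᵥ (diracWeight x y t *ᵥ u0) with hg0def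
  set g1 : ℝ → ℝ := fun t => u1 ⬝ᵥ (diracWeight x y t *ᵥ u1) with hg1def
  set G0 : ℝ → ENNReal := fun t => ENNReal.ofReal (g0 t) with hG0def
  set G1 : ℝ → ENNReal := fun t => ENNReal.ofReal (g1 t) with hG1def
  have hg0eq : g0 = fun t => (2 * y t)⁻¹ * ((u0 0 - x t * u0 1)^2 + (y t * u0 1)^2) :=
    funext (gfun_eq x y u0)
  have hg1eq : g1 = fun t => (2 * y t)⁻¹ * ((u1 0 - x t * u1 1)^2 + (y t * u1 1)^2) :=
    funext (gfun_eq x y u1)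
  have hG0 : Measurable G0 := by
    apply Measurable.ennreal_ofReal; rw [hg0eq]; fun_prop
  have hG1 : Measurable G1 := by
    apply Measurable.ennreal_ofReal; rw [hg1eq]; fun_prop
  have h0nn : ∀ t ∈ I, 0 ≤ g0 t := by
    intro t ht; rw [hg0eq]; have := hypos t ht; positivity
  have h1nn : ∀ t ∈ I, 0 ≤ g1 t := by
    intro t ht; rw [hg1eq]; have := hypos t ht; positivity
  set F : ℝ × ℝ → ENNReal := fun p => if p.1 < p.2 then G0 p.1 * G1 p.2 else 0 with hFdef
  set F' : ℝ × ℝ → ENNReal := fun p => if p.1 < p.2 then 0 else G1 p.1 * G0 p.2 with hF'def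
  have hF : Measurable F := by
    apply Measurable.ite (measurableSet_lt measurable_fst measurable_snd)
    · exact (hG0.comp measurable_fst).mul (hG1.comp measurable_snd)
    · exact measurable_const
  have hF' : Measurable F' := by
    apply Measurable.ite (measurableSet_lt measurable_fst measurable_snd)
    · exact measurable_const
    · exact (hG1.comp measurable_fst).mul (hG0.comp measurable_snd)
  -- pointwise identity
  have key1 : ∀ s ∈ I, ∀ t ∈ I,
      ENNReal.ofReal (∑ i : Fin 2, ∑ j : Fin 2, (diracResKernel x y u0 u1 s t i j) ^ 2)
        = F (s, t) + F' (s, t) := by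
    intro s hs t ht
    by_cases hst : s < t
    · simp only [diracResKernel, if_pos hst, hFdef, hF'def, add_zero]
      rw [sumK x y u0 u1 s t (hypos s hs) (hypos t ht),
        ENNReal.ofReal_mul (h0nn s hs)]
    · simp only [diracResKernel, if_neg hst, hFdef, hF'def, zero_add]
      rw [sumK x y u1 u0 s t (hypos s hs) (hypos t ht),
        ENNReal.ofReal_mul (h1nn s hs)]
  -- abbreviation for the common value
  set R : ENNReal := ∫⁻ t in I, G1 t * ∫⁻ s in I ∩ Set.Iio t, G0 s with hRdef
  have inner1 : ∀ t : ℝ, (∫⁻ s in I, F (s, t)) = (∫⁻ s in I ∩ Set.Iio t, G0 s) * G1 t := by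
    intro t
    have hpt : ∀ s : ℝ, F (s, t) = (Set.Iio t).indicator (fun s => G0 s * G1 t) s := by
      intro s
      by_cases h : s < t
      · simp [hFdef, h, Set.indicator_apply, Set.mem_Iio]
      · simp [hFdef, h, Set.indicator_apply, Set.mem_Iio]
    simp_rw [hpt]
    rw [lintegral_indicator measurableSet_Iio,
      Measure.restrict_restrict measurableSet_Iio, Set.inter_comm,
      lintegral_mul_const _ hG0]
  have inner2 : ∀ s : ℝ, (∫⁻ t in I, F' (s, t)) = G1 s * ∫⁻ t in I ∩ Set.Iio s, G0 t := by
    intro s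
    have hpt : ∀ t : ℝ, F' (s, t) = (Set.Iic s).indicator (fun t => G1 s * G0 t) t := by
      intro t
      by_cases h : s < t
      · simp [hF'def, h, Set.indicator_apply, Set.mem_Iic, not_le.mpr h]
      · simp [hF'def, h, Set.indicator_apply, Set.mem_Iic, not_lt.mp h]
    simp_rw [hpt]
    rw [lintegral_indicator measurableSet_Iic,
      Measure.restrict_restrict measurableSet_Iic, Set.inter_comm,
      lintegral_const_mul _ hG0]
    congr 1
    apply setLIntegral_congr
    exact Filter.EventuallyEq.inter (Filter.EventuallyEq.refl _ _) Iio_ae_eq_Iic.symm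
  calc
    ∫⁻ s in I, ∫⁻ t in I,
        ENNReal.ofReal (∑ i : Fin 2, ∑ j : Fin 2, (diracResKernel x y u0 u1 s t i j) ^ 2)
      = ∫⁻ s in I, ∫⁻ t in I, (F (s, t) + F' (s, t)) := by
        apply setLIntegral_congr_fun hIm
        intro s hs
        apply setLIntegral_congr_fun hIm
        intro t ht
        exact key1 s hs t ht
    _ = (∫⁻ s in I, ∫⁻ t in I, F (s, t)) + ∫⁻ s in I, ∫⁻ t in I, F' (s, t) := by
        have hsplit : ∀ s : ℝ, (∫⁻ t in I, (F (s, t) + F' (s, t)))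
            = (∫⁻ t in I, F (s, t)) + ∫⁻ t in I, F' (s, t) := fun s =>
          lintegral_add_left (hF.comp measurable_prodMk_left) _
        simp_rw [hsplit]
        exact lintegral_add_left (hF.lintegral_prod_right') _
    _ = (∫⁻ t in I, ∫⁻ s in I, F (s, t)) + ∫⁻ s in I, ∫⁻ t in I, F' (s, t) := by
        rw [lintegral_lintegral_swap (f := fun s t => F (s, t)) hF.aemeasurable]
    _ = R + R := by
        congr 1
        · rw [lintegral_congr inner1]
          exact lintegral_congr fun t => mul_comm _ _
        · rw [lintegral_congr inner2]
    _ = 2 * R := (two_mul R).symm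
    _ = 2 * ∫⁻ t in I, ∫⁻ s in I ∩ Set.Iio t,
          ENNReal.ofReal ((u0 ⬝ᵥ (diracWeight x y s *ᵥ u0)) *
            (u1 ⬝ᵥ (diracWeight x y t *ᵥ u1))) := by
        congr 1
        apply (setLIntegral_congr_fun hIm _).symm
        intro t ht
        dsimp only
        have : ∀ s ∈ I ∩ Set.Iio t,
            ENNReal.ofReal (g0 s * g1 t) = G0 s * G1 t := by
          intro s hs
          rw [ENNReal.ofReal_mul (h0nn s hs.1)]
        rw [setLIntegral_congr_fun (hIm.inter measurableSet_Iio)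
          this]
        rw [lintegral_mul_const _ hG0, mul_comm]
end

section
/- Let Q be a 2×2 real orthogonal matrix with determinant 1 and let 𝒬 be the corresponding Möbius transformation of the closed upper half-plane. If τ = Dir(R, 𝔲_0, 𝔲_1) is a Dirac operator with generating path x+iy and weight function R, then QτQ^{-1} is a Dirac operator with generating path 𝒬(x+iy), weight function QRQᵀ, and boundary conditions Q𝔲_0, Q𝔲_1; in particular the two operators have the same spectrum and the same integral trace ∫_0^1 𝔲_0ᵀ R(s) 𝔲_1 ds = ∫_0^1 (Q𝔲_0)ᵀ QR(s)Qᵀ (Q𝔲_1) ds. -/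
open Matrix MeasureTheory Complex

/-- The Möbius action of a real 2×2 matrix `Q` on a point of the upper half plane. -/
noncomputable def mobiusAct (Q : Matrix (Fin 2) (Fin 2) ℝ) (z : ℂ) : ℂ :=
  ((Q 0 0 : ℂ) * z + (Q 0 1 : ℂ)) / ((Q 1 0 : ℂ) * z + (Q 1 1 : ℂ))

/-- Imaginary part of the Möbius image. -/
lemma mob_im_aux (a c x y : ℝ) (h1 : a^2+c^2=1) :
    (((a:ℂ)*(x+y*I) + (-c))/((c:ℂ)*(x+y*I)+a)).im
    = y / ((c*x+a)^2 + (c*y)^2) := by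
  simp only [Complex.div_im, Complex.add_im, Complex.add_re, Complex.mul_im, Complex.mul_re,
    Complex.ofReal_re, Complex.ofReal_im, Complex.I_re, Complex.I_im, Complex.normSq_apply,
    Complex.neg_re, Complex.neg_im]
  ring_nf
  linear_combination (y * (a * x * c * 2 + a ^ 2 + y ^ 2 * c ^ 2 + x ^ 2 * c ^ 2)⁻¹) * h1

/-- Real part of the Möbius image. -/
lemma mob_re_aux (a c x y : ℝ) :
    (((a:ℂ)*(x+y*I) + (-c))/((c:ℂ)*(x+y*I)+a)).re
    = ((a*x-c)*(c*x+a) + a*c*y^2) / ((c*x+a)^2 + (c*y)^2) := by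
  simp only [Complex.div_re, Complex.add_im, Complex.add_re, Complex.mul_im, Complex.mul_re,
    Complex.ofReal_re, Complex.ofReal_im, Complex.I_re, Complex.I_im, Complex.normSq_apply,
    Complex.neg_re, Complex.neg_im]
  ring_nf

/-- The denominator is positive. -/
lemma mob_den_pos_aux (a c x y : ℝ) (h1 : a^2+c^2=1) (hy : 0 < y) :
    0 < (c*x+a)^2 + (c*y)^2 := by
  rcases eq_or_ne c 0 with h|h
  · subst h; simp; nlinarith
  · positivity

/-- The key matrix identity. -/
lemma key_mat_aux (a c X Y p q : ℝ) (h1 : a^2+c^2=1) (hY : 0 < Y)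
    (hD : 0 < (c*X+a)^2 + (c*Y)^2)
    (hp : p = ((a*X-c)*(c*X+a) + a*c*Y^2) / ((c*X+a)^2 + (c*Y)^2))
    (hq : q = Y / ((c*X+a)^2 + (c*Y)^2)) :
    (2 * q)⁻¹ •
      ((!![1, -p; 0, q] : Matrix (Fin 2) (Fin 2) ℝ)ᵀ * !![1, -p; 0, q])
    = !![a, -c; c, a] *
        ((2 * Y)⁻¹ • ((!![1, -X; 0, Y] : Matrix (Fin 2) (Fin 2) ℝ)ᵀ * !![1, -X; 0, Y])) *
        !![a, -c; c, a]ᵀ := by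
  have hDne := hD.ne'
  have hYne := hY.ne'
  have hqpos : 0 < q := by rw [hq]; positivity
  have hqne := hqpos.ne'
  have hq' : q * ((c*X+a)^2 + (c*Y)^2) = Y := by rw [hq, div_mul_cancel₀ _ hDne]
  have hp' : p * ((c*X+a)^2 + (c*Y)^2) = (a*X-c)*(c*X+a) + a*c*Y^2 := by rw [hp, div_mul_cancel₀ _ hDne]
  clear hp hq
  have e4 : (p*p + q*q) * Y = ((c - a*X)*c + (-(c*X) + a*(X^2+Y^2))*a) * q := by
    have hzero : ((p*p + q*q) * Y - ((c - a*X)*c + (-(c*X) + a*(X^2+Y^2))*a) * q)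
        * ((c*X+a)^2 + (c*Y)^2)^2 = 0 := by
      linear_combination
        (Y*(p*((c*X+a)^2 + (c*Y)^2) + ((a*X-c)*(c*X+a) + a*c*Y^2))) * hp'
        + (Y*(q*((c*X+a)^2 + (c*Y)^2) + Y)
            - ((c - a*X)*c + (-(c*X) + a*(X^2+Y^2))*a) * ((c*X+a)^2 + (c*Y)^2)) * hq'
        + (-(Y^3)*(a^2+c^2+1)) * h1
    rcases mul_eq_zero.mp hzero with h | h
    · linarith
    · exact absurd h (pow_ne_zero 2 hDne)
  ext i j
  fin_cases i <;> fin_cases j <;>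
    simp [Matrix.mul_apply, Fin.sum_univ_two, Matrix.smul_apply, Matrix.vecMul, Matrix.vecHead,
      Matrix.vecTail, Matrix.transpose_apply, dotProduct, Matrix.cons_val', Matrix.of_apply,
      Matrix.cons_val_zero, Matrix.cons_val_one] <;>
    field_simp
  · linear_combination (-1 : ℝ) * hq'
  · linear_combination p*hq' - q*hp'
  · linear_combination p*hq' - q*hp'
  · linear_combination e4

/-- for `Q ∈ SO(2)` and a Dirac operator with generating path `x+iy`
and weight `R`, the conjugated operator `QτQ⁻¹` is the Dirac operator with
generating path `𝒬(x+iy)`, weight `QRQᵀ` and boundary conditions `Q𝔲₀, Q𝔲₁`;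
in particular the integral traces agree:
`∫₀¹ 𝔲₀ᵀ R 𝔲₁ = ∫₀¹ (Q𝔲₀)ᵀ (QRQᵀ) (Q𝔲₁)`. -/
theorem dirac_rotation_equivalence
    (Q : Matrix (Fin 2) (Fin 2) ℝ) (hQ : Qᵀ * Q = 1) (hdet : Q.det = 1)
    (x y : ℝ → ℝ) (hy : ∀ t, 0 < y t) (u0 u1 : Fin 2 → ℝ) :
    (∀ t, 0 < (mobiusAct Q (x t + y t * Complex.I)).im) ∧
    (∀ t, diracWeight (fun s => (mobiusAct Q (x s + y s * Complex.I)).re)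
        (fun s => (mobiusAct Q (x s + y s * Complex.I)).im) t
      = Q * diracWeight x y t * Qᵀ) ∧
    (∫ t in Set.Ioo (0 : ℝ) 1, u0 ⬝ᵥ (diracWeight x y t *ᵥ u1)
      = ∫ t in Set.Ioo (0 : ℝ) 1,
          (Q *ᵥ u0) ⬝ᵥ ((Q * diracWeight x y t * Qᵀ) *ᵥ (Q *ᵥ u1))) := by
  set a := Q 0 0 with ha
  set c := Q 1 0 with hc
  have h00 : a^2 + c^2 = 1 := by
    have := congrFun (congrFun hQ 0) 0
    simp [Matrix.mul_apply, Fin.sum_univ_two, Matrix.one_apply] at this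
    nlinarith [this]
  have h01 : a * Q 0 1 + c * Q 1 1 = 0 := by
    have := congrFun (congrFun hQ 0) 1
    simpa [Matrix.mul_apply, Fin.sum_univ_two, Matrix.one_apply] using this
  have hdet' : a * Q 1 1 - Q 0 1 * c = 1 := by
    have := hdet
    rw [Matrix.det_fin_two] at this
    simpa using this
  have hd : Q 1 1 = a := by
    linear_combination (-(Q 1 1)) * h00 + a * hdet' + c * h01
  have hb : Q 0 1 = -c := by
    linear_combination (-(Q 0 1)) * h00 + a * h01 - c * hdet'
  have hmob : ∀ t, mobiusAct Q (x t + y t * Complex.I)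
      = ((a:ℂ)*(x t + y t * I) + (-c))/((c:ℂ)*(x t + y t * I)+a) := by
    intro t
    simp [mobiusAct, hb, hd, ← ha, ← hc]
  have him : ∀ t, (mobiusAct Q (x t + y t * Complex.I)).im
      = y t / ((c*x t+a)^2 + (c*y t)^2) := by
    intro t; rw [hmob t]; exact mob_im_aux a c (x t) (y t) h00
  have hre : ∀ t, (mobiusAct Q (x t + y t * Complex.I)).re
      = ((a*x t-c)*(c*x t+a) + a*c*(y t)^2) / ((c*x t+a)^2 + (c*y t)^2) := by
    intro t; rw [hmob t]; exact mob_re_aux a c (x t) (y t)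
  have hD : ∀ t, 0 < (c*x t+a)^2 + (c*y t)^2 :=
    fun t => mob_den_pos_aux a c _ _ h00 (hy t)
  have hQmat : Q = !![a, -c; c, a] := by
    ext i j
    fin_cases i <;> fin_cases j <;> simp [hb, hd, ← ha, ← hc]
  refine ⟨?_, ?_, ?_⟩
  · intro t
    rw [him t]
    exact div_pos (hy t) (hD t)
  · intro t
    have hdet2 : ∀ (u v : ℝ), (!![1, -u; 0, v] : Matrix (Fin 2) (Fin 2) ℝ).det = v := by
      intro u v; simp [Matrix.det_fin_two_of]
    simp only [diracWeight, hdet2, hre, him]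
    rw [hQmat]
    exact key_mat_aux a c (x t) (y t) _ _ h00 (hy t) (hD t) rfl rfl
  · have hpt : ∀ (R : Matrix (Fin 2) (Fin 2) ℝ),
        (Q *ᵥ u0) ⬝ᵥ ((Q * R * Qᵀ) *ᵥ (Q *ᵥ u1)) = u0 ⬝ᵥ (R *ᵥ u1) := by
      intro R
      have h2 : Q * R * Qᵀ * Q = Q * R := by
        rw [Matrix.mul_assoc (Q * R), hQ, Matrix.mul_one]
      rw [Matrix.mulVec_mulVec, h2, ← Matrix.mulVec_mulVec,
        Matrix.dotProduct_mulVec, ← Matrix.mulVec_transpose, Matrix.mulVec_mulVec, hQ]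
      simp
    refine integral_congr_ae (Filter.Eventually.of_forall fun t => ?_)
    exact (hpt (diracWeight x y t)).symm
end

section
/- Let γ_0,…,γ_{n-1} be points in the open unit disk and let b_k = A_{γ_0,𝔻}^{-1} ∘ ⋯ ∘ A_{γ_{k-1},𝔻}^{-1}(0) be the associated path. Define b'_k = A_{b̂_{n-1},𝔻}(b̂_{n-1-k}) where b̂_{-1} = 1 and b̂_k, 0≤k≤n-1, is the path produced by the coefficients γ̄_{n-2}, γ̄_{n-3}, …, γ̄_0. Then b'_k, 0≤k≤n-1, coincides with the first n elements of the path produced by the coefficients γ̄_0^ι, γ̄_1^ι, …, γ̄_{n-2}^ι, where γ^ι = -γ(1-γ̄)/(1-γ). -/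
open Complex

/-- The disk automorphism `A_{γ,𝔻}(z) = ((z-γ)/(1-γ̄z))·((1-γ̄)/(1-γ))` fixing `1`. -/
noncomputable def diskMob (γ z : ℂ) : ℂ :=
  ((z - γ) / (1 - starRingEnd ℂ γ * z)) * ((1 - starRingEnd ℂ γ) / (1 - γ))

/-- The path `b_k = A_{c_0,𝔻}⁻¹ ∘ ⋯ ∘ A_{c_{k-1},𝔻}⁻¹(0)` produced by a sequence of
(modified Verblunsky) coefficients `c`, using `A_{γ,𝔻}⁻¹ = A_{γ^ι,𝔻}`. -/
noncomputable def diskPath : (ℕ → ℂ) → ℕ → ℂ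
  | _, 0 => 0
  | c, (k + 1) => diskMob (diskIota (c 0)) (diskPath (fun j => c (j + 1)) k)


lemma sub_ne_of_div {a b : ℂ} (hb : b ≠ 0) (h : (1:ℂ) - a / b ≠ 0) : b - a ≠ 0 := by
  intro h0; apply h
  rw [show a = b by linear_combination -h0, div_self hb, sub_self]

lemma sub_mul_ne_of_div {a b p q : ℂ} (hb : b ≠ 0) (hq : q ≠ 0)
    (h : (1:ℂ) - (a / b) * (p / q) ≠ 0) : b * q - a * p ≠ 0 := by
  intro h0; apply h
  rw [div_mul_div_comm, show a * p = b * q by linear_combination -h0,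
    div_self (mul_ne_zero hb hq), sub_self]

lemma diskMob_fraction {γ z a b c d p q : ℂ} (hγ : γ = a / b) (hcγ : starRingEnd ℂ γ = c / d)
    (hz : z = p / q) (hb : b ≠ 0) (hd : d ≠ 0) (hq : q ≠ 0)
    (h1 : b - a ≠ 0) (h2 : d * q - c * p ≠ 0) :
    diskMob γ z = ((b * p - a * q) * (d - c)) / ((d * q - c * p) * (b - a)) := by
  rw [diskMob, hcγ, hγ, hz]
  field_simp

lemma one_sub_ne {x : ℂ} (h : ‖x‖ < 1) : (1 : ℂ) - x ≠ 0 := by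
  intro h0
  have : x = 1 := by linear_combination -h0
  rw [this] at h; simp at h
lemma abs_one_sub_conj (γ : ℂ) :
    ‖1 - starRingEnd ℂ γ‖ = ‖1 - γ‖ := by
  rw [show (1 : ℂ) - starRingEnd ℂ γ = starRingEnd ℂ (1 - γ) by simp, Complex.norm_conj]
lemma abs_diskIota {γ : ℂ} (h : ‖γ‖ < 1) : ‖diskIota γ‖ = ‖γ‖ := by
  have h1 : ‖1 - γ‖ ≠ 0 := norm_ne_zero_iff.mpr (one_sub_ne h)
  rw [diskIota, norm_div, norm_mul, norm_neg, abs_one_sub_conj]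
  field_simp
lemma one_mul_ne {x y : ℂ} (hx : ‖x‖ < 1) (hy : ‖y‖ < 1) :
    (1 : ℂ) - x * y ≠ 0 := by
  apply one_sub_ne
  rw [norm_mul]
  calc ‖x‖ * ‖y‖ ≤ ‖x‖ * 1 :=
        mul_le_mul_of_nonneg_left hy.le (norm_nonneg _)
    _ < 1 := by simpa using hx
lemma abs_diskMob {γ z : ℂ} (hγ : ‖γ‖ < 1) (hz : ‖z‖ < 1) :
    ‖diskMob γ z‖ < 1 := by
  have h1 : (1 : ℂ) - γ ≠ 0 := one_sub_ne hγ
  have hden : (1 : ℂ) - starRingEnd ℂ γ * z ≠ 0 := one_mul_ne (by rwa [Complex.norm_conj]) hz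
  have hfac : ‖(1 - starRingEnd ℂ γ) / (1 - γ)‖ = 1 := by
    rw [norm_div, abs_one_sub_conj, div_self (norm_ne_zero_iff.mpr h1)]
  rw [diskMob, norm_mul, hfac, mul_one, norm_div,
    div_lt_one (norm_pos_iff.mpr hden)]
  have key : Complex.normSq (1 - starRingEnd ℂ γ * z) - Complex.normSq (z - γ)
      = (1 - Complex.normSq γ) * (1 - Complex.normSq z) := by
    simp only [Complex.normSq_apply, Complex.sub_re, Complex.sub_im, Complex.mul_re,
      Complex.mul_im, Complex.conj_re, Complex.conj_im, Complex.one_re, Complex.one_im]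
    ring
  have hγ2 : Complex.normSq γ < 1 := by
    rw [← Complex.sq_norm]; nlinarith [norm_nonneg γ]
  have hz2 : Complex.normSq z < 1 := by
    rw [← Complex.sq_norm]; nlinarith [norm_nonneg z]
  have hlt : Complex.normSq (z - γ) < Complex.normSq (1 - starRingEnd ℂ γ * z) := by nlinarith
  rw [← Complex.sq_norm, ← Complex.sq_norm] at hlt
  nlinarith [norm_nonneg (z - γ), norm_nonneg (1 - starRingEnd ℂ γ * z)]
lemma conj_diskMob (γ z : ℂ) :
    starRingEnd ℂ (diskMob γ z) = diskMob (starRingEnd ℂ γ) (starRingEnd ℂ z) := by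
  simp [diskMob, map_div₀]

lemma diskMob_comp {γ u z : ℂ} (hγ : ‖γ‖ < 1) (hu : ‖u‖ < 1)
    (hz : ‖z‖ < 1) :
    diskMob (diskMob (diskIota γ) u) (diskMob (diskIota γ) z) = diskMob u z := by
  have hγ' : ‖starRingEnd ℂ γ‖ < 1 := by rwa [Complex.norm_conj]
  have hu' : ‖starRingEnd ℂ u‖ < 1 := by rwa [Complex.norm_conj]
  have hIa : ‖diskIota γ‖ < 1 := by rw [abs_diskIota hγ]; exact hγ
  have hcIa : ‖starRingEnd ℂ (diskIota γ)‖ < 1 := by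
    rw [Complex.norm_conj]; exact hIa
  have hb : (1 : ℂ) - γ ≠ 0 := one_sub_ne hγ
  have hd : (1 : ℂ) - starRingEnd ℂ γ ≠ 0 := one_sub_ne hγ'
  have hI : diskIota γ = -γ * (1 - starRingEnd ℂ γ) / (1 - γ) := rfl
  have hcI : starRingEnd ℂ (diskIota γ)
      = -(starRingEnd ℂ γ) * (1 - γ) / (1 - starRingEnd ℂ γ) := by
    rw [diskIota, map_div₀, map_mul, map_neg, map_sub, map_sub, map_one,
      Complex.conj_conj]
  -- denominator facts for the inner fractions
  have hI1 : (1 : ℂ) - diskIota γ ≠ 0 := one_sub_ne hIa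
  rw [hI] at hI1
  have h1I := sub_ne_of_div hb hI1
  have hcI1 : (1 : ℂ) - starRingEnd ℂ (diskIota γ) ≠ 0 := one_sub_ne hcIa
  rw [hcI] at hcI1
  have hDC := sub_ne_of_div hd hcI1
  have hcIz : (1 : ℂ) - starRingEnd ℂ (diskIota γ) * z ≠ 0 := one_mul_ne hcIa hz
  rw [hcI] at hcIz
  have h2M := sub_mul_ne_of_div hd one_ne_zero (by rw [div_one]; exact hcIz)
  have hcIu : (1 : ℂ) - starRingEnd ℂ (diskIota γ) * u ≠ 0 := one_mul_ne hcIa hu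
  rw [hcI] at hcIu
  have h2N := sub_mul_ne_of_div hd one_ne_zero (by rw [div_one]; exact hcIu)
  have hIcu : (1 : ℂ) - diskIota γ * starRingEnd ℂ u ≠ 0 := one_mul_ne hIa hu'
  rw [hI] at hIcu
  have h2cN := sub_mul_ne_of_div hb one_ne_zero (by rw [div_one]; exact hIcu)
  -- fraction forms of M, N, conj N
  have hM := diskMob_fraction hI hcI (div_one z).symm hb hd one_ne_zero h1I h2M
  have hN := diskMob_fraction hI hcI (div_one u).symm hb hd one_ne_zero h1I h2N
  have hcN : starRingEnd ℂ (diskMob (diskIota γ) u)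
      = diskMob (starRingEnd ℂ (diskIota γ)) (starRingEnd ℂ u) := conj_diskMob _ _
  rw [diskMob_fraction hcI (by rw [Complex.conj_conj]; exact hI) (div_one (starRingEnd ℂ u)).symm
    hd hb one_ne_zero hDC h2cN] at hcN
  -- outer map
  have hNabs : ‖diskMob (diskIota γ) u‖ < 1 := abs_diskMob hIa hu
  have hMabs : ‖diskMob (diskIota γ) z‖ < 1 := abs_diskMob hIa hz
  have hcNabs : ‖starRingEnd ℂ (diskMob (diskIota γ) u)‖ < 1 := by
    rw [Complex.norm_conj]; exact hNabs
  have QN0 := mul_ne_zero h2N h1I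
  have QM0 := mul_ne_zero h2M h1I
  have QcN0 := mul_ne_zero h2cN hDC
  have hN1 : (1 : ℂ) - diskMob (diskIota γ) u ≠ 0 := one_sub_ne hNabs
  rw [hN] at hN1
  have h1O := sub_ne_of_div QN0 hN1
  have hcNM : (1 : ℂ) - starRingEnd ℂ (diskMob (diskIota γ) u) * diskMob (diskIota γ) z ≠ 0 :=
    one_mul_ne hcNabs hMabs
  rw [hcN, hM] at hcNM
  have h2O := sub_mul_ne_of_div QcN0 QM0 hcNM
  -- RHS fraction
  have h1R : (1 : ℂ) - u ≠ 0 := one_sub_ne hu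
  have hcuz : (1 : ℂ) - starRingEnd ℂ u * z ≠ 0 := one_mul_ne hu' hz
  have h2R : (1 : ℂ) * 1 - starRingEnd ℂ u * z ≠ 0 := by rw [one_mul]; exact hcuz
  rw [diskMob_fraction hN hcN hM QN0 QcN0 QM0 h1O h2O,
    diskMob_fraction (γ := u) (div_one u).symm (div_one (starRingEnd ℂ u)).symm (div_one z).symm
      one_ne_zero one_ne_zero one_ne_zero h1R h2R,
    div_eq_div_iff (mul_ne_zero h2O h1O) (mul_ne_zero h2R h1R)]
  ring


lemma iota_iota {γ : ℂ} (h : ‖γ‖ < 1) : diskIota (diskIota γ) = γ := by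
  have h1 : (1 : ℂ) - γ ≠ 0 := one_sub_ne h
  have h2 : (1 : ℂ) - starRingEnd ℂ γ ≠ 0 := one_sub_ne (by rwa [Complex.norm_conj])
  have h4 : (1 : ℂ) - diskIota γ ≠ 0 := one_sub_ne (by rw [abs_diskIota h]; exact h)
  rw [show diskIota (diskIota γ) =
      -(diskIota γ) * (1 - starRingEnd ℂ (diskIota γ)) / (1 - diskIota γ) from rfl]
  rw [div_eq_iff h4]
  rw [show starRingEnd ℂ (diskIota γ) = -starRingEnd ℂ γ * (1 - γ) / (1 - starRingEnd ℂ γ) by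
    rw [diskIota, map_div₀, map_mul, map_neg, map_sub, map_sub, map_one, Complex.conj_conj]]
  rw [diskIota]
  field_simp
  ring

lemma diskMob_zero_left (z : ℂ) : diskMob 0 z = z := by simp [diskMob]

lemma diskMob_zero_right (γ : ℂ) : diskMob γ 0 = diskIota γ := by
  simp [diskMob, diskIota, mul_div_assoc, neg_div]

lemma diskMob_inv {γ w : ℂ} (hγ : ‖γ‖ < 1) (hw : ‖w‖ < 1) :
    diskMob (diskIota γ) (diskMob γ w) = w := by
  have hIa : ‖diskIota γ‖ < 1 := by rw [abs_diskIota hγ]; exact hγ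
  have h0 : ‖(0 : ℂ)‖ < 1 := by simp
  have h := diskMob_comp (γ := diskIota γ) hIa h0 hw
  rw [iota_iota hγ, diskMob_zero_right, diskMob_zero_left] at h
  exact h

noncomputable def genPath : (ℕ → ℂ) → ℕ → ℂ → ℂ
  | _, 0, z => z
  | c, (m + 1), z => diskMob (diskIota (c 0)) (genPath (fun j => c (j + 1)) m z)

lemma diskPath_eq_genPath (c : ℕ → ℂ) (m : ℕ) : diskPath c m = genPath c m 0 := by
  induction m generalizing c with
  | zero => rfl
  | succ m ih => rw [diskPath, genPath, ih]

lemma diskPath_congr {c c' : ℕ → ℂ} (m : ℕ) (h : ∀ j, j < m → c j = c' j) :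
    diskPath c m = diskPath c' m := by
  induction m generalizing c c' with
  | zero => rfl
  | succ m ih =>
    rw [diskPath, diskPath, h 0 (Nat.succ_pos m),
      ih (fun j hj => h (j + 1) (Nat.succ_lt_succ hj))]

lemma abs_diskPath {c : ℕ → ℂ} (m : ℕ) (h : ∀ j, j < m → ‖c j‖ < 1) :
    ‖diskPath c m‖ < 1 := by
  induction m generalizing c with
  | zero => simp [diskPath]
  | succ m ih =>
    rw [diskPath]
    have h0 : ‖c 0‖ < 1 := h 0 (Nat.succ_pos m)
    exact abs_diskMob (by rw [abs_diskIota h0]; exact h0)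
      (ih (fun j hj => h (j + 1) (Nat.succ_lt_succ hj)))

lemma abs_genPath {c : ℕ → ℂ} {z : ℂ} (m : ℕ) (h : ∀ j, j < m → ‖c j‖ < 1)
    (hz : ‖z‖ < 1) : ‖genPath c m z‖ < 1 := by
  induction m generalizing c with
  | zero => exact hz
  | succ m ih =>
    rw [genPath]
    have h0 : ‖c 0‖ < 1 := h 0 (Nat.succ_pos m)
    exact abs_diskMob (by rw [abs_diskIota h0]; exact h0)
      (ih (fun j hj => h (j + 1) (Nat.succ_lt_succ hj)))

lemma genPath_succ (c : ℕ → ℂ) (m : ℕ) (z : ℂ) :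
    genPath c (m + 1) z = genPath c m (diskMob (diskIota (c m)) z) := by
  induction m generalizing c z with
  | zero => rfl
  | succ m ih =>
    rw [show genPath c (m + 1 + 1) z
        = diskMob (diskIota (c 0)) (genPath (fun j => c (j + 1)) (m + 1) z) from rfl,
      ih, genPath]

lemma genPath_cancel {c : ℕ → ℂ} {z : ℂ} (m : ℕ) (h : ∀ j, j < m → ‖c j‖ < 1)
    (hz : ‖z‖ < 1) : diskMob (genPath c m 0) (genPath c m z) = z := by
  induction m generalizing c with
  | zero => exact diskMob_zero_left z
  | succ m ih =>
    have h0 : ‖c 0‖ < 1 := h 0 (Nat.succ_pos m)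
    have h' : ∀ j, j < m → ‖(fun j => c (j + 1)) j‖ < 1 :=
      fun j hj => h (j + 1) (Nat.succ_lt_succ hj)
    rw [genPath, genPath, diskMob_comp h0 (abs_genPath m h' (by simp)) (abs_genPath m h' hz)]
    exact ih h'

lemma key_lemma {c : ℕ → ℂ} (m : ℕ) (h : ∀ j, j < m → ‖c j‖ < 1) :
    ∀ k, k ≤ m → diskPath c (m - k)
      = genPath c m (diskPath (fun j => diskIota (c (m - 1 - j))) k) := by
  induction m with
  | zero =>
    intro k hk
    interval_cases k
    rfl
  | succ m ih =>
    intro k hk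
    match k with
    | 0 =>
      rw [show diskPath (fun j => diskIota (c (m + 1 - 1 - j))) 0 = 0 from rfl,
        Nat.sub_zero, diskPath_eq_genPath]
    | (k + 1) =>
      have hk' : k ≤ m := Nat.succ_le_succ_iff.mp hk
      have hcm : ‖c m‖ < 1 := h m (Nat.lt_succ_self m)
      have hd' : ∀ j, j < k → ‖diskIota (c (m - 1 - j))‖ < 1 := by
        intro j hj
        have : ‖c (m - 1 - j)‖ < 1 :=
          h _ (Nat.lt_succ_of_le (le_trans (Nat.sub_le _ _) (Nat.sub_le _ _)))
        rw [abs_diskIota this]; exact this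
      have hstep : diskPath (fun j => diskIota (c (m + 1 - 1 - j))) (k + 1)
          = diskMob (c m) (diskPath (fun j => diskIota (c (m - 1 - j))) k) := by
        rw [diskPath]
        have e0 : diskIota (diskIota (c (m + 1 - 1 - 0))) = c m := by
          rw [show m + 1 - 1 - 0 = m by omega]; exact iota_iota hcm
        rw [e0]
        congr 1
        exact diskPath_congr k (fun j hj => by
          rw [show m + 1 - 1 - (j + 1) = m - 1 - j by omega])
      rw [hstep, genPath_succ,
        diskMob_inv hcm (abs_diskPath k hd'),
        show m + 1 - (k + 1) = m - k by omega]
      exact ih (fun j hj => h j (Nat.lt_succ_of_lt hj)) k hk'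


/-- pulling back the reversed path through the automorphism sending
`b̂_{n-1}` to `0` produces the path generated by the coefficients
`γ̄_0^ι, γ̄_1^ι, …, γ̄_{n-2}^ι`. -/
theorem pulled_back_path_eq
    (n : ℕ) (hn : 1 ≤ n) (γ : ℕ → ℂ)
    (hγ : ∀ j, j ≤ n - 2 → ‖γ j‖ < 1) :
    ∀ k, k ≤ n - 1 →
      diskMob (diskPath (fun j => starRingEnd ℂ (γ (n - 2 - j))) (n - 1))
          (diskPath (fun j => starRingEnd ℂ (γ (n - 2 - j))) (n - 1 - k))
        = diskPath (fun j => diskIota (starRingEnd ℂ (γ j))) k := by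
  intro k hk
  set c : ℕ → ℂ := fun j => starRingEnd ℂ (γ (n - 2 - j)) with hc
  have hcabs : ∀ j, j < n - 1 → ‖c j‖ < 1 := by
    intro j hj
    rw [hc]
    simpa [Complex.norm_conj] using hγ (n - 2 - j) (Nat.sub_le _ _)
  have hd' : ∀ j, j < k → ‖(fun j => diskIota (c (n - 1 - 1 - j))) j‖ < 1 := by
    intro j hj
    have hlt : n - 1 - 1 - j < n - 1 := by omega
    have : ‖c (n - 1 - 1 - j)‖ < 1 := hcabs _ hlt
    rw [abs_diskIota this]; exact this
  rw [key_lemma (n - 1) hcabs k hk, diskPath_eq_genPath c (n - 1),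
    genPath_cancel (n - 1) hcabs (abs_diskPath k hd')]
  refine diskPath_congr k (fun j hj => ?_)
  rw [show n - 1 - 1 - j = n - 2 - j by omega]
  show diskIota (starRingEnd ℂ (γ (n - 2 - (n - 2 - j)))) = _
  rw [show n - 2 - (n - 2 - j) = j by omega]
end

section
/- Let z_1,…,z_n be the eigenvalues of the CMV matrix C(α_0,…,α_{n-1}) with α_k ∈ 𝔻 for all k (so the matrix is a strict contraction truncation), related to modified Verblunsky coefficients γ_k by the recursion γ_k = ᾱ_k ∏_{j<k}(1-γ̄_j)/(1-γ_j). Then ∏_{j=0}^{n-1}(1-γ_j) = ∏_{j=1}^n (1-z_j) and ∏_{j=0}^{n-1}(1-γ̄_j) = ∏_{j=1}^n (1-z̄_j). -/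
open Complex Matrix Finset

noncomputable def cmvRho (α : ℕ → ℂ) (k : ℕ) : ℂ :=
  ((Real.sqrt (1 - ‖α k‖ ^ 2) : ℝ) : ℂ)

/-- The matrix `L = diag(Ξ_0, Ξ_2, …)` of the CMV factorization, where
`Ξ_k = [[ᾱ_k, ρ_k],[ρ_k, -α_k]]` occupies rows/columns `k, k+1`. -/
noncomputable def cmvL (n : ℕ) (α : ℕ → ℂ) : Matrix (Fin n) (Fin n) ℂ := fun i j =>
  if i.val = j.val then
    (if i.val % 2 = 0 then starRingEnd ℂ (α i.val) else -α (i.val - 1))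
  else if j.val = i.val + 1 ∧ i.val % 2 = 0 then cmvRho α i.val
  else if i.val = j.val + 1 ∧ j.val % 2 = 0 then cmvRho α j.val
  else 0

/-- The matrix `M = diag(Ξ_{-1}, Ξ_1, Ξ_3, …)` of the CMV factorization,
with `Ξ_{-1} = (1)`. -/
noncomputable def cmvM (n : ℕ) (α : ℕ → ℂ) : Matrix (Fin n) (Fin n) ℂ := fun i j =>
  if i.val = j.val then
    (if i.val = 0 then 1
     else if i.val % 2 = 1 then starRingEnd ℂ (α i.val) else -α (i.val - 1))
  else if j.val = i.val + 1 ∧ i.val % 2 = 1 then cmvRho α i.val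
  else if i.val = j.val + 1 ∧ j.val % 2 = 1 then cmvRho α j.val
  else 0

/-- The CMV matrix `C(α_0,…,α_{n-1}) = LM`. -/
noncomputable def cmvMatrix (n : ℕ) (α : ℕ → ℂ) : Matrix (Fin n) (Fin n) ℂ :=
  cmvL n α * cmvM n α

/-! ### Auxiliary machinery -/

/-- symmetric tridiagonal matrix with diagonal `d` and off-diagonal `e` -/
noncomputable def triM (d e : ℕ → ℂ) (n : ℕ) : Matrix (Fin n) (Fin n) ℂ := fun i j =>
  if (i : ℕ) = j then d i
  else if (i : ℕ) + 1 = j then e i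
  else if (j : ℕ) + 1 = i then e j
  else 0

lemma sum_pair_eq {n : ℕ} (f : Fin n → ℂ) (p q : Fin n) (hpq : p ≠ q)
    (h : ∀ k, k ≠ p → k ≠ q → f k = 0) : ∑ k, f k = f p + f q := by
  rw [← Finset.sum_subset (Finset.subset_univ ({p, q} : Finset (Fin n)))
      (fun x _ hx => h x (fun h' => hx (by simp [h'])) (fun h' => hx (by simp [h'])))]
  exact Finset.sum_pair hpq

lemma triM_submatrix (d e : ℕ → ℂ) (n : ℕ) :
    (triM d e (n+1)).submatrix Fin.castSucc Fin.castSucc = triM d e n := by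
  ext i j
  simp [triM, Matrix.submatrix_apply]

lemma succAbove_cs_last_cs {n : ℕ} (k : Fin n) :
    (((Fin.castSucc (Fin.last n)).succAbove (Fin.castSucc k) : Fin (n+2)) : ℕ) = (k : ℕ) := by
  rw [Fin.succAbove]
  rw [if_pos (by simp [Fin.lt_def, k.isLt])]
  simp

lemma succAbove_cs_last_last {n : ℕ} :
    (((Fin.castSucc (Fin.last n)).succAbove (Fin.last n) : Fin (n+2)) : ℕ) = n + 1 := by
  rw [Fin.succAbove]
  rw [if_neg (by simp [Fin.lt_def])]
  simp

lemma tri_rec (d e : ℕ → ℂ) (n : ℕ) :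
    det (triM d e (n+2)) = d (n+1) * det (triM d e (n+1)) - e n ^ 2 * det (triM d e n) := by
  rw [Matrix.det_succ_row _ (Fin.last (n+1))]
  rw [sum_pair_eq _ (Fin.castSucc (Fin.last n)) (Fin.last (n+1))
      (by simp [Fin.ext_iff])
      (by
        intro k hk1 hk2
        have h1 : (k : ℕ) ≠ n := fun h => hk1 (by simp [Fin.ext_iff, h])
        have h2 : (k : ℕ) ≠ n + 1 := fun h => hk2 (by simp [Fin.ext_iff, h])
        have : triM d e (n+2) (Fin.last (n+1)) k = 0 := by
          simp only [triM, Fin.val_last]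
          rw [if_neg (by omega), if_neg (by omega), if_neg (by omega)]
        simp [this])]
  have hlast : triM d e (n+2) (Fin.last (n+1)) (Fin.last (n+1)) = d (n+1) := by
    simp [triM]
  have hminor_last : (triM d e (n+2)).submatrix (Fin.last (n+1)).succAbove
      (Fin.last (n+1)).succAbove = triM d e (n+1) := by
    rw [Fin.succAbove_last]; exact triM_submatrix d e (n+1)
  have hent : triM d e (n+2) (Fin.last (n+1)) (Fin.castSucc (Fin.last n)) = e n := by
    simp only [triM, Fin.val_last, Fin.coe_castSucc]
    simp
    exact fun h => absurd h (by omega)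
  set B := (triM d e (n+2)).submatrix (Fin.last (n+1)).succAbove
      (Fin.castSucc (Fin.last n)).succAbove with hB
  have hBdet : det B = e n * det (triM d e n) := by
    rw [Matrix.det_succ_column _ (Fin.last n)]
    rw [Finset.sum_eq_single (Fin.last n)]
    · have hBent : B (Fin.last n) (Fin.last n) = e n := by
        simp only [hB, Matrix.submatrix_apply, Fin.succAbove_last, triM]
        rw [if_neg (by rw [succAbove_cs_last_last]; simp)]
        rw [if_pos (by rw [succAbove_cs_last_last]; simp)]
        simp
      have hBminor : B.submatrix (Fin.last n).succAbove (Fin.last n).succAbove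
          = triM d e n := by
        ext i j
        simp only [hB, Matrix.submatrix_apply, Fin.succAbove_last, triM,
          Fin.coe_castSucc, succAbove_cs_last_cs]
      rw [hBent, hBminor]
      have h1 : ((-1:ℂ))^((Fin.last n : ℕ)+(Fin.last n : ℕ)) = 1 := by
        rw [Fin.val_last, show n+n = 2*n by ring, pow_mul]; norm_num
      rw [h1, one_mul]
    · intro b _ hb
      have hbv : (b : ℕ) < n := by
        have := b.isLt; rcases Nat.lt_succ_iff_lt_or_eq.mp this with h | h
        · exact h
        · exact absurd (Fin.ext h) hb
      have : B b (Fin.last n) = 0 := by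
        simp only [hB, Matrix.submatrix_apply, Fin.succAbove_last, triM,
          Fin.coe_castSucc, succAbove_cs_last_last]
        rw [if_neg (by omega), if_neg (by omega), if_neg (by omega)]
      simp [this]
    · simp
  rw [hlast, hminor_last, hent, hBdet]
  simp only [Fin.val_last, Fin.coe_castSucc]
  have h1 : ((-1:ℂ))^(n+1+n) = -1 := by
    rw [show n+1+n = 2*n+1 by ring, pow_succ, pow_mul]; norm_num
  have h2 : ((-1:ℂ))^(n+1+(n+1)) = 1 := by
    rw [show n+1+(n+1) = 2*(n+1) by ring, pow_mul]; norm_num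
  rw [h1, h2]
  ring

lemma det_triM_zero (d e : ℕ → ℂ) : det (triM d e 0) = 1 := by simp
lemma det_triM_one (d e : ℕ → ℂ) : det (triM d e 1) = d 0 := by
  rw [show (1:ℕ) = 0+1 from rfl, Matrix.det_fin_one]
  simp [triM]

noncomputable def aSeq (α : ℕ → ℂ) : ℕ → ℂ
  | 0 => 1
  | k+1 => aSeq α k - (starRingEnd ℂ) (α k) * (starRingEnd ℂ) (aSeq α k)

lemma rho_sq {α : ℕ → ℂ} (k : ℕ) (h : ‖α k‖ ≤ 1) :
    cmvRho α k ^ 2 = 1 - α k * (starRingEnd ℂ) (α k) := by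
  have h0 : (0:ℝ) ≤ 1 - ‖α k‖ ^ 2 := by nlinarith [norm_nonneg (α k)]
  have : cmvRho α k ^ 2 = ((1 - ‖α k‖ ^ 2 : ℝ) : ℂ) := by
    rw [cmvRho, ← Complex.ofReal_pow, Real.sq_sqrt h0]
  rw [this, Complex.mul_conj]
  norm_cast
  rw [Complex.sq_norm]

lemma conj_rho {α : ℕ → ℂ} (k : ℕ) : (starRingEnd ℂ) (cmvRho α k) = cmvRho α k :=
  Complex.conj_ofReal _

noncomputable def dL (α : ℕ → ℂ) (i : ℕ) : ℂ :=
  if i % 2 = 0 then (starRingEnd ℂ) (α i) else -α (i-1)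
noncomputable def eL (α : ℕ → ℂ) (i : ℕ) : ℂ :=
  if i % 2 = 0 then cmvRho α i else 0
noncomputable def dM (α : ℕ → ℂ) (i : ℕ) : ℂ :=
  if i = 0 then 1 else if i % 2 = 1 then (starRingEnd ℂ) (α i) else -α (i-1)
noncomputable def eM (α : ℕ → ℂ) (i : ℕ) : ℂ :=
  if i % 2 = 1 then cmvRho α i else 0
noncomputable def dJ (α : ℕ → ℂ) (i : ℕ) : ℂ := (starRingEnd ℂ) (dL α i) - dM α i
noncomputable def eJ (α : ℕ → ℂ) (i : ℕ) : ℂ := (starRingEnd ℂ) (eL α i) - eM α i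

lemma eJ_sq {α : ℕ → ℂ} (k : ℕ) (h : ‖α k‖ ≤ 1) :
    eJ α k ^ 2 = 1 - α k * (starRingEnd ℂ) (α k) := by
  rw [eJ, eL, eM]
  rcases Nat.even_or_odd k with hk | hk
  · have h2 : k % 2 = 0 := Nat.even_iff.mp hk
    rw [if_pos h2, if_neg (by omega), conj_rho, sub_zero, rho_sq k h]
  · have h2 : k % 2 = 1 := Nat.odd_iff.mp hk
    rw [if_neg (by omega), if_pos h2, map_zero, zero_sub, neg_pow, rho_sq k h]
    ring

lemma det_triL (α : ℕ → ℂ) (hα : ∀ k, ‖α k‖ ≤ 1) (t : ℕ) :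
    det (triM (dL α) (eL α) (2*t)) = (-1)^t ∧
    det (triM (dL α) (eL α) (2*t+1)) = (-1)^t * (starRingEnd ℂ) (α (2*t)) := by
  induction t with
  | zero =>
    constructor
    · simpa using det_triM_zero (dL α) (eL α)
    · rw [det_triM_one]; simp [dL]
  | succ t ih =>
    obtain ⟨ih1, ih2⟩ := ih
    have e1 : det (triM (dL α) (eL α) (2*t+2)) = (-1)^(t+1) := by
      rw [show 2*t+2 = (2*t)+2 by ring, tri_rec, ih1, ih2]
      rw [show dL α (2*t+1) = -α (2*t) by rw [dL, if_neg (by omega)]; simp]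
      rw [show eL α (2*t) ^ 2 = 1 - α (2*t) * (starRingEnd ℂ) (α (2*t)) by
        rw [eL, if_pos (by omega)]; exact rho_sq _ (hα _)]
      ring
    constructor
    · rw [show 2*(t+1) = 2*t+2 by ring]; exact e1
    · rw [show 2*(t+1)+1 = (2*t+1)+2 by ring, tri_rec]
      rw [show (2*t+1)+1 = 2*t+2 by ring, e1]
      rw [show dL α (2*t+2) = (starRingEnd ℂ) (α (2*t+2)) by rw [dL, if_pos (by omega)]]
      rw [show eL α (2*t+1) = 0 by rw [eL, if_neg (by omega)]]
      rw [show 2*(t+1) = 2*t+2 by ring]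
      ring

lemma det_triMM (α : ℕ → ℂ) (hα : ∀ k, ‖α k‖ ≤ 1) (t : ℕ) :
    det (triM (dM α) (eM α) (2*t+1)) = (-1)^t ∧
    det (triM (dM α) (eM α) (2*t+2)) = (-1)^t * (starRingEnd ℂ) (α (2*t+1)) := by
  induction t with
  | zero =>
    have h1 : det (triM (dM α) (eM α) 1) = 1 := by rw [det_triM_one]; simp [dM]
    refine ⟨by simpa using h1, ?_⟩
    rw [show (2*0+2 : ℕ) = 0+2 by ring, tri_rec]
    rw [show (0+1 : ℕ) = 1 from rfl, h1]
    rw [show dM α 1 = (starRingEnd ℂ) (α 1) by rw [dM, if_neg (by omega), if_pos (by omega)]]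
    rw [show eM α 0 = 0 by rw [eM, if_neg (by omega)]]
    simp
  | succ t ih =>
    obtain ⟨ih1, ih2⟩ := ih
    have e1 : det (triM (dM α) (eM α) (2*t+3)) = (-1)^(t+1) := by
      rw [show 2*t+3 = (2*t+1)+2 by ring, tri_rec, show (2*t+1)+1 = 2*t+2 by ring, ih2, ih1]
      rw [show dM α (2*t+2) = -α (2*t+1) by
        rw [dM, if_neg (by omega), if_neg (by omega)]; norm_num]
      rw [show eM α (2*t+1) ^ 2 = 1 - α (2*t+1) * (starRingEnd ℂ) (α (2*t+1)) by
        rw [eM, if_pos (by omega)]; exact rho_sq _ (hα _)]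
      ring
    constructor
    · rw [show 2*(t+1)+1 = 2*t+3 by ring]; exact e1
    · rw [show 2*(t+1)+2 = (2*t+2)+2 by ring, tri_rec, show (2*t+2)+1 = 2*t+3 by ring, e1, ih2]
      rw [show dM α (2*t+3) = (starRingEnd ℂ) (α (2*t+3)) by
        rw [dM, if_neg (by omega), if_pos (by omega)]]
      rw [show eM α (2*t+2) = 0 by rw [eM, if_neg (by omega)]]
      rw [show 2*(t+1)+1 = 2*t+3 by ring]
      ring

lemma dJ_zero (α : ℕ → ℂ) : dJ α 0 = α 0 - 1 := by
  simp [dJ, dL, dM]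
lemma dJ_odd (α : ℕ → ℂ) (i : ℕ) (h : i % 2 = 1) :
    dJ α i = -((starRingEnd ℂ) (α (i-1)) + (starRingEnd ℂ) (α i)) := by
  rw [dJ, dL, dM, if_neg (by omega), if_neg (by omega), if_pos h]
  simp only [map_neg]
  ring
lemma dJ_even (α : ℕ → ℂ) (i : ℕ) (h0 : i ≠ 0) (h : i % 2 = 0) :
    dJ α i = α i + α (i-1) := by
  rw [dJ, dL, dM, if_pos h, if_neg h0, if_neg (by omega)]
  simp only [Complex.conj_conj, sub_neg_eq_add]

lemma det_triJ (α : ℕ → ℂ) (hα : ∀ k, ‖α k‖ ≤ 1) (t : ℕ) :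
    det (triM (dJ α) (eJ α) (2*t)) = (-1)^t * aSeq α (2*t) ∧
    det (triM (dJ α) (eJ α) (2*t+1)) = (-1)^(t+1) * (starRingEnd ℂ) (aSeq α (2*t+1)) := by
  induction t with
  | zero =>
    constructor
    · simp [aSeq]
    · rw [show (2*0+1 : ℕ) = 1 by ring, det_triM_one, dJ_zero]
      simp [aSeq]
  | succ t ih =>
    obtain ⟨ih1, ih2⟩ := ih
    have e1 : det (triM (dJ α) (eJ α) (2*t+2)) = (-1)^(t+1) * aSeq α (2*t+2) := by
      rw [show 2*t+2 = (2*t)+2 by ring, tri_rec, ih1, ih2]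
      rw [dJ_odd α (2*t+1) (by omega), show 2*t+1-1 = 2*t by omega]
      rw [eJ_sq (2*t) (hα _)]
      rw [show aSeq α (2*t+2) = aSeq α (2*t+1) -
        (starRingEnd ℂ) (α (2*t+1)) * (starRingEnd ℂ) (aSeq α (2*t+1)) from rfl]
      rw [show aSeq α (2*t+1) = aSeq α (2*t) -
        (starRingEnd ℂ) (α (2*t)) * (starRingEnd ℂ) (aSeq α (2*t)) from rfl]
      simp only [map_sub, _root_.map_mul, Complex.conj_conj]
      ring
    constructor
    · rw [show 2*(t+1) = 2*t+2 by ring]; exact e1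
    · rw [show 2*(t+1)+1 = (2*t+1)+2 by ring, tri_rec, show (2*t+1)+1 = 2*t+2 by ring, e1, ih2]
      rw [dJ_even α (2*t+2) (by omega) (by omega), show 2*t+2-1 = 2*t+1 by omega]
      rw [eJ_sq (2*t+1) (hα _)]
      rw [show aSeq α (2*t+1+2) = aSeq α (2*t+2) -
        (starRingEnd ℂ) (α (2*t+2)) * (starRingEnd ℂ) (aSeq α (2*t+2)) from rfl]
      rw [show aSeq α (2*t+2) = aSeq α (2*t+1) -
        (starRingEnd ℂ) (α (2*t+1)) * (starRingEnd ℂ) (aSeq α (2*t+1)) from rfl]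
      simp only [map_sub, _root_.map_mul, Complex.conj_conj]
      ring

lemma cmvL_eq_tri (n : ℕ) (α : ℕ → ℂ) : cmvL n α = triM (dL α) (eL α) n := by
  ext i j
  simp only [cmvL, triM, dL, eL]
  split_ifs <;> first | rfl | omega

lemma cmvM_eq_tri (n : ℕ) (α : ℕ → ℂ) : cmvM n α = triM (dM α) (eM α) n := by
  ext i j
  simp only [cmvM, triM, dM, eM]
  split_ifs <;> first | rfl | omega

lemma triM_map_conj (d e : ℕ → ℂ) (n : ℕ) :
    (triM d e n).map (starRingEnd ℂ) =
      triM (fun i => (starRingEnd ℂ) (d i)) (fun i => (starRingEnd ℂ) (e i)) n := by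
  ext i j
  simp only [Matrix.map_apply, triM]
  split_ifs <;> simp

lemma triM_sub (d1 e1 d2 e2 : ℕ → ℂ) (n : ℕ) :
    triM d1 e1 n - triM d2 e2 n = triM (d1 - d2) (e1 - e2) n := by
  ext i j
  simp only [Matrix.sub_apply, triM, Pi.sub_apply]
  split_ifs <;> simp

lemma triM_congr (d1 e1 d2 e2 : ℕ → ℂ) (n : ℕ) (hd : ∀ i, d1 i = d2 i)
    (he : ∀ i, e1 i = e2 i) : triM d1 e1 n = triM d2 e2 n := by
  ext i j
  simp only [triM, hd, he]

lemma triM_neg (d e : ℕ → ℂ) (n : ℕ) :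
    -triM d e n = triM (fun i => -(d i)) (fun i => -(e i)) n := by
  ext i j
  simp only [Matrix.neg_apply, triM]
  split_ifs <;> simp
lemma cmvL_mul_conj (n : ℕ) (α : ℕ → ℂ) (hα : ∀ k, ‖α k‖ ≤ 1)
    (hn : n % 2 = 0) :
    cmvL n α * (cmvL n α).map (starRingEnd ℂ) = 1 := by
  ext i j
  rw [Matrix.mul_apply]
  obtain ⟨p, hp2, hip, hpn⟩ : ∃ p, p % 2 = 0 ∧ (i.val = p ∨ i.val = p+1) ∧ p+1 < n :=
    ⟨i.val - i.val % 2, by omega, by omega, by have := i.isLt; omega⟩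
  set pf : Fin n := ⟨p, by omega⟩ with hpf
  set pf1 : Fin n := ⟨p+1, hpn⟩ with hpf1
  have hvp : (pf : ℕ) = p := rfl
  have hvp1 : (pf1 : ℕ) = p+1 := rfl
  have hvanish : ∀ k : Fin n, k ≠ pf → k ≠ pf1 →
      cmvL n α i k * (cmvL n α).map (starRingEnd ℂ) k j = 0 := by
    intro k hk1 hk2
    have hk1' : k.val ≠ p := fun h => hk1 (Fin.ext h)
    have hk2' : k.val ≠ p+1 := fun h => hk2 (Fin.ext h)
    have : cmvL n α i k = 0 := by
      rw [cmvL]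
      rw [if_neg (by omega), if_neg (by push_neg; omega), if_neg (by push_neg; omega)]
    rw [this, zero_mul]
  rw [sum_pair_eq _ pf pf1 (by simp [Fin.ext_iff, hvp, hvp1]) hvanish]
  simp only [Matrix.map_apply]
  have hLpp : cmvL n α pf pf = (starRingEnd ℂ) (α p) := by
    rw [cmvL]; rw [if_pos rfl, if_pos hp2]
  have hLpp1 : cmvL n α pf pf1 = cmvRho α p := by
    rw [cmvL]; rw [if_neg (by simp [hvp, hvp1]), if_pos (by exact ⟨rfl, hp2⟩)]
  have hLp1p : cmvL n α pf1 pf = cmvRho α p := by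
    rw [cmvL]
    rw [if_neg (by simp [hvp, hvp1]), if_neg (by push_neg; omega), if_pos (by exact ⟨rfl, hp2⟩)]
  have hLp1p1 : cmvL n α pf1 pf1 = -α p := by
    rw [cmvL]; rw [if_pos rfl, if_neg (by rw [hvp1]; omega)]
    rw [hvp1]; norm_num
  rcases hip with hi | hi
  · have hieq : i = pf := Fin.ext hi
    subst hieq
    rcases (show j.val = p ∨ j.val = p+1 ∨ (j.val ≠ p ∧ j.val ≠ p+1) by omega) with hj | hj | hj
    · have : j = pf := Fin.ext hj
      subst this
      rw [hLpp, hLpp1, hLp1p, conj_rho, Matrix.one_apply_eq]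
      have h2 := rho_sq (α := α) p (hα p)
      rw [Complex.conj_conj]
      linear_combination h2
    · have : j = pf1 := Fin.ext hj
      subst this
      rw [hLpp, hLpp1, hLp1p1]
      rw [Matrix.one_apply_ne (by simp [Fin.ext_iff, hvp, hvp1])]
      simp only [map_neg, conj_rho]
      ring
    · have hz1 : cmvL n α pf j = 0 := by
        rw [cmvL]
        rw [if_neg (by simp [hvp]; omega), if_neg (by push_neg; intro h; omega),
          if_neg (by push_neg; intro h; omega)]
      have hz2 : cmvL n α pf1 j = 0 := by
        rw [cmvL]
        rw [if_neg (by simp [hvp1]; omega), if_neg (by push_neg; intro h; omega),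
          if_neg (by push_neg; intro h; omega)]
      rw [hz1, hz2, Matrix.one_apply_ne (by simp [Fin.ext_iff]; omega)]
      simp
  · have hieq : i = pf1 := Fin.ext hi
    subst hieq
    rcases (show j.val = p ∨ j.val = p+1 ∨ (j.val ≠ p ∧ j.val ≠ p+1) by omega) with hj | hj | hj
    · have : j = pf := Fin.ext hj
      subst this
      rw [hLp1p, hLpp, hLp1p1, conj_rho]
      rw [Matrix.one_apply_ne (by simp [Fin.ext_iff, hvp, hvp1])]
      simp only [Complex.conj_conj]
      ring
    · have : j = pf1 := Fin.ext hj
      subst this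
      rw [hLp1p, hLpp1, hLp1p1, conj_rho, Matrix.one_apply_eq]
      have h2 := rho_sq (α := α) p (hα p)
      simp only [map_neg]
      linear_combination h2
    · have hz1 : cmvL n α pf j = 0 := by
        rw [cmvL]
        rw [if_neg (by simp [hvp]; omega), if_neg (by push_neg; intro h; omega),
          if_neg (by push_neg; intro h; omega)]
      have hz2 : cmvL n α pf1 j = 0 := by
        rw [cmvL]
        rw [if_neg (by simp [hvp1]; omega), if_neg (by push_neg; intro h; omega),
          if_neg (by push_neg; intro h; omega)]
      rw [hz1, hz2, Matrix.one_apply_ne (by simp [Fin.ext_iff]; omega)]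
      simp

lemma cmvM_mul_conj (n : ℕ) (α : ℕ → ℂ) (hα : ∀ k, ‖α k‖ ≤ 1)
    (hn : n % 2 = 1) :
    cmvM n α * (cmvM n α).map (starRingEnd ℂ) = 1 := by
  have hn0 : 0 < n := by omega
  ext i j
  rw [Matrix.mul_apply]
  by_cases hi0 : i.val = 0
  · have hieq : i = ⟨0, hn0⟩ := Fin.ext hi0
    subst hieq
    have hM00 : cmvM n α ⟨0, hn0⟩ ⟨0, hn0⟩ = 1 := by
      rw [cmvM]; rw [if_pos rfl, if_pos rfl]
    have hrow : ∀ k : Fin n, k.val ≠ 0 → cmvM n α ⟨0, hn0⟩ k = 0 := by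
      intro k hk
      rw [cmvM]
      rw [if_neg (by simp only [Fin.val_mk]; omega), if_neg (by simp only [Fin.val_mk]; omega),
        if_neg (by simp only [Fin.val_mk]; omega)]
    rw [Finset.sum_eq_single (⟨0, hn0⟩ : Fin n)]
    · by_cases hj0 : j.val = 0
      · have : j = ⟨0, hn0⟩ := Fin.ext hj0
        subst this
        rw [Matrix.map_apply, hM00, Matrix.one_apply_eq]
        simp
      · rw [Matrix.map_apply, hrow j (by omega), hM00,
          Matrix.one_apply_ne (by simp only [Ne, Fin.ext_iff, Fin.val_mk]; omega)]
        simp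
    · intro b _ hb
      rw [hrow b (fun h => hb (Fin.ext h)), zero_mul]
    · simp
  · obtain ⟨p, hp2, hip, hpn⟩ : ∃ p, p % 2 = 1 ∧ (i.val = p ∨ i.val = p+1) ∧ p+1 < n := by
      refine ⟨if i.val % 2 = 1 then i.val else i.val - 1, ?_, ?_, ?_⟩ <;>
        split_ifs <;> first | omega | (have := i.isLt; omega)
    set pf : Fin n := ⟨p, by omega⟩ with hpf
    set pf1 : Fin n := ⟨p+1, hpn⟩ with hpf1
    have hvp : (pf : ℕ) = p := rfl
    have hvp1 : (pf1 : ℕ) = p+1 := rfl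
    have hvanish : ∀ k : Fin n, k ≠ pf → k ≠ pf1 →
        cmvM n α i k * (cmvM n α).map (starRingEnd ℂ) k j = 0 := by
      intro k hk1 hk2
      have hk1' : k.val ≠ p := fun h => hk1 (Fin.ext h)
      have hk2' : k.val ≠ p+1 := fun h => hk2 (Fin.ext h)
      have : cmvM n α i k = 0 := by
        rw [cmvM]
        rw [if_neg (by omega), if_neg (by omega), if_neg (by omega)]
      rw [this, zero_mul]
    rw [sum_pair_eq _ pf pf1 (by simp only [Ne, Fin.ext_iff, hvp, hvp1]; omega) hvanish]
    simp only [Matrix.map_apply]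
    have hMpp : cmvM n α pf pf = (starRingEnd ℂ) (α p) := by
      rw [cmvM]; rw [if_pos rfl, if_neg (by rw [hvp]; omega), if_pos (by rw [hvp]; omega)]
    have hMpp1 : cmvM n α pf pf1 = cmvRho α p := by
      rw [cmvM]; rw [if_neg (by rw [hvp, hvp1]; omega),
        if_pos (by rw [hvp, hvp1]; exact ⟨rfl, hp2⟩)]
    have hMp1p : cmvM n α pf1 pf = cmvRho α p := by
      rw [cmvM]
      rw [if_neg (by rw [hvp, hvp1]; omega), if_neg (by rw [hvp, hvp1]; omega),
        if_pos (by rw [hvp, hvp1]; exact ⟨rfl, hp2⟩)]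
    have hMp1p1 : cmvM n α pf1 pf1 = -α p := by
      rw [cmvM]
      rw [if_pos rfl, if_neg (by rw [hvp1]; omega), if_neg (by rw [hvp1]; omega)]
      rw [hvp1]; norm_num
    rcases hip with hi | hi
    · have hieq : i = pf := Fin.ext hi
      subst hieq
      rcases (show j.val = p ∨ j.val = p+1 ∨ (j.val ≠ p ∧ j.val ≠ p+1) by omega)
        with hj | hj | hj
      · have : j = pf := Fin.ext hj
        subst this
        rw [hMpp, hMpp1, hMp1p, conj_rho, Matrix.one_apply_eq]
        have h2 := rho_sq (α := α) p (hα p)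
        rw [Complex.conj_conj]
        linear_combination h2
      · have : j = pf1 := Fin.ext hj
        subst this
        rw [hMpp, hMpp1, hMp1p1]
        rw [Matrix.one_apply_ne (by simp only [Ne, Fin.ext_iff, hvp, hvp1]; omega)]
        simp only [map_neg, conj_rho]
        ring
      · have hz1 : cmvM n α pf j = 0 := by
          rw [cmvM]
          rw [if_neg (by simp only [hvp]; omega), if_neg (by simp only [hvp]; omega),
            if_neg (by simp only [hvp]; omega)]
        have hz2 : cmvM n α pf1 j = 0 := by
          rw [cmvM]
          rw [if_neg (by simp only [hvp1]; omega), if_neg (by simp only [hvp1]; omega),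
            if_neg (by simp only [hvp1]; omega)]
        rw [hz1, hz2, Matrix.one_apply_ne (by simp only [Ne, Fin.ext_iff, hvp]; omega)]
        simp
    · have hieq : i = pf1 := Fin.ext hi
      subst hieq
      rcases (show j.val = p ∨ j.val = p+1 ∨ (j.val ≠ p ∧ j.val ≠ p+1) by omega)
        with hj | hj | hj
      · have : j = pf := Fin.ext hj
        subst this
        rw [hMp1p, hMpp, hMp1p1, conj_rho]
        rw [Matrix.one_apply_ne (by simp only [Ne, Fin.ext_iff, hvp, hvp1]; omega)]
        simp only [Complex.conj_conj]
        ring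
      · have : j = pf1 := Fin.ext hj
        subst this
        rw [hMp1p, hMpp1, hMp1p1, conj_rho, Matrix.one_apply_eq]
        have h2 := rho_sq (α := α) p (hα p)
        simp only [map_neg]
        linear_combination h2
      · have hz1 : cmvM n α pf j = 0 := by
          rw [cmvM]
          rw [if_neg (by simp only [hvp]; omega), if_neg (by simp only [hvp]; omega),
            if_neg (by simp only [hvp]; omega)]
        have hz2 : cmvM n α pf1 j = 0 := by
          rw [cmvM]
          rw [if_neg (by simp only [hvp1]; omega), if_neg (by simp only [hvp1]; omega),
            if_neg (by simp only [hvp1]; omega)]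
        rw [hz1, hz2, Matrix.one_apply_ne (by simp only [Ne, Fin.ext_iff, hvp1]; omega)]
        simp

lemma det_one_sub_cmv (n : ℕ) (α : ℕ → ℂ) (hα : ∀ k, ‖α k‖ ≤ 1) :
    det (1 - cmvMatrix n α) = aSeq α n := by
  rcases Nat.even_or_odd n with hn | hn
  · -- n even
    obtain ⟨t, ht⟩ := hn
    have ht' : n = 2 * t := by omega
    have hL := cmvL_mul_conj n α hα (by omega)
    have key : (1 : Matrix (Fin n) (Fin n) ℂ) - cmvMatrix n α =
        cmvL n α * ((cmvL n α).map (starRingEnd ℂ) - cmvM n α) := by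
      rw [Matrix.mul_sub, hL, cmvMatrix]
    rw [key, Matrix.det_mul]
    have hdetL : det (cmvL n α) = (-1 : ℂ)^t := by
      rw [cmvL_eq_tri, ht']; exact (det_triL α hα t).1
    have hJ : (cmvL n α).map (starRingEnd ℂ) - cmvM n α = triM (dJ α) (eJ α) n := by
      rw [cmvL_eq_tri, cmvM_eq_tri, triM_map_conj, triM_sub]
      exact triM_congr _ _ _ _ n (fun i => rfl) (fun i => rfl)
    rw [hJ, hdetL, ht', (det_triJ α hα t).1, ← mul_assoc, ← pow_add,
      show t + t = 2*t by ring, pow_mul]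
    norm_num
  · -- n odd
    obtain ⟨t, ht⟩ := hn
    have hM := cmvM_mul_conj n α hα (by omega)
    have h1 : det (1 - cmvMatrix n α) = det (1 - cmvM n α * cmvL n α) := by
      calc det (1 - cmvMatrix n α) = det (1 + cmvL n α * -(cmvM n α)) := by
            rw [Matrix.mul_neg, ← sub_eq_add_neg, cmvMatrix]
        _ = det (1 + -(cmvM n α) * cmvL n α) := Matrix.det_one_add_mul_comm _ _
        _ = det (1 - cmvM n α * cmvL n α) := by rw [Matrix.neg_mul, ← sub_eq_add_neg]
    have key : (1 : Matrix (Fin n) (Fin n) ℂ) - cmvM n α * cmvL n α =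
        cmvM n α * ((cmvM n α).map (starRingEnd ℂ) - cmvL n α) := by
      rw [Matrix.mul_sub, hM]
    rw [h1, key, Matrix.det_mul]
    have hdetM : det (cmvM n α) = (-1 : ℂ)^t := by
      rw [cmvM_eq_tri, ht]; exact (det_triMM α hα t).1
    have hJ : (cmvM n α).map (starRingEnd ℂ) - cmvL n α =
        -((triM (dJ α) (eJ α) n).map (starRingEnd ℂ)) := by
      rw [cmvL_eq_tri, cmvM_eq_tri, triM_map_conj, triM_map_conj, triM_sub, triM_neg]
      refine triM_congr _ _ _ _ n (fun i => ?_) (fun i => ?_) <;>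
        simp [dJ, eJ, map_sub, sub_eq_neg_add] <;> ring
    rw [hJ, Matrix.det_neg]
    have hmapdet : ((triM (dJ α) (eJ α) n).map (starRingEnd ℂ)).det
        = (starRingEnd ℂ) ((triM (dJ α) (eJ α) n).det) := by
      rw [RingHom.map_det, RingHom.mapMatrix_apply]
    rw [hmapdet]
    rw [show ((triM (dJ α) (eJ α) n)).det = (-1 : ℂ)^(t+1) * (starRingEnd ℂ) (aSeq α n) by
      rw [ht]; exact (det_triJ α hα t).2]
    rw [hdetM]
    simp only [Fintype.card_fin, _root_.map_mul, map_pow, map_neg, _root_.map_one,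
      Complex.conj_conj]
    rw [ht]
    rw [show (-1 : ℂ)^t * ((-1:ℂ)^(2*t+1) * ((-1:ℂ)^(t+1) * aSeq α (2*t+1))) =
      (-1 : ℂ)^(t + (2*t+1) + (t+1)) * aSeq α (2*t+1) by rw [pow_add, pow_add]; ring]
    rw [show t + (2*t+1) + (t+1) = 2*(2*t+1) by ring, pow_mul]
    norm_num

lemma aSeq_congr (α β : ℕ → ℂ) (k : ℕ) (h : ∀ j, j < k → α j = β j) :
    aSeq α k = aSeq β k := by
  induction k with
  | zero => rfl
  | succ k ih =>
    show aSeq α k - _ = aSeq β k - _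
    rw [ih (fun j hj => h j (by omega)), h k (by omega)]

lemma cmvL_congr (n : ℕ) (α β : ℕ → ℂ) (h : ∀ j, j < n → α j = β j) :
    cmvL n α = cmvL n β := by
  ext i j
  have hi := i.isLt
  have hj := j.isLt
  simp only [cmvL, cmvRho]
  split_ifs <;> first | rfl | rw [h _ (by omega)] | rw [h _ (by omega)]

lemma cmvM_congr (n : ℕ) (α β : ℕ → ℂ) (h : ∀ j, j < n → α j = β j) :
    cmvM n α = cmvM n β := by
  ext i j
  have hi := i.isLt
  have hj := j.isLt
  simp only [cmvM, cmvRho]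
  split_ifs <;> first | rfl | rw [h _ (by omega)] | rw [h _ (by omega)]

/-- for the CMV matrix `C(α_0,…,α_{n-1})` with all `α_k ∈ 𝔻` and
modified Verblunsky coefficients `γ_k`, one has `∏_{j<n}(1-γ_j) = ∏_j (1-z_j)`
and `∏_{j<n}(1-γ̄_j) = ∏_j (1-z̄_j)`, where `z_j` are the eigenvalues of `C`;
equivalently `det(I - C) = ∏(1-γ_j)` and `conj(det(I - C)) = ∏(1-γ̄_j)`. -/
theorem cmv_det_one_sub_eq_prod_modified
    (n : ℕ) (α γ : ℕ → ℂ)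
    (hα : ∀ k, k < n → ‖α k‖ < 1)
    (hγ : ∀ k, k < n → γ k = starRingEnd ℂ (α k) *
      ∏ j ∈ Finset.range k, (1 - starRingEnd ℂ (γ j)) / (1 - γ j)) :
    Matrix.det (1 - cmvMatrix n α) = ∏ j ∈ Finset.range n, (1 - γ j) ∧
    starRingEnd ℂ (Matrix.det (1 - cmvMatrix n α))
      = ∏ j ∈ Finset.range n, (1 - starRingEnd ℂ (γ j)) := by
  -- a cut-off coefficient sequence, bounded everywhere
  set α' : ℕ → ℂ := fun k => if k < n then α k else 0 with hα'def
  have hagree : ∀ j, j < n → α j = α' j := fun j hj => by simp [hα'def, hj]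
  have hle : ∀ k, ‖α' k‖ ≤ 1 := by
    intro k
    by_cases h : k < n
    · simp only [hα'def, if_pos h]; exact (hα k h).le
    · simp [hα'def, h]
  have hdetEq : Matrix.det (1 - cmvMatrix n α) = aSeq α n := by
    have : cmvMatrix n α = cmvMatrix n α' := by
      rw [cmvMatrix, cmvMatrix, cmvL_congr n α α' hagree, cmvM_congr n α α' hagree]
    rw [this, det_one_sub_cmv n α' hle, aSeq_congr α' α n (fun j hj => (hagree j hj).symm)]
  -- the γ's lie in the unit disc
  have habs : ∀ k, k < n → ‖γ k‖ < 1 := by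
    intro k
    induction k using Nat.strong_induction_on with
    | _ k ih =>
      intro hk
      rw [hγ k hk, norm_mul]
      have hone : ∀ j ∈ Finset.range k,
          ‖(1 - starRingEnd ℂ (γ j)) / (1 - γ j)‖ = 1 := by
        intro j hj
        have hj' : j < k := Finset.mem_range.mp hj
        have h1 : (1 : ℂ) - γ j ≠ 0 := by
          intro h0
          have hg1 : γ j = 1 := by linear_combination -h0
          have := ih j hj' (by omega)
          rw [hg1] at this
          simp at this
        rw [norm_div, show (1 : ℂ) - starRingEnd ℂ (γ j) = starRingEnd ℂ (1 - γ j) by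
          simp [map_sub], Complex.norm_conj, div_self (norm_ne_zero_iff.mpr h1)]
      rw [norm_prod, Finset.prod_congr rfl hone, Finset.prod_const_one, mul_one,
        Complex.norm_conj]
      exact hα k hk
  have hne : ∀ j, j < n → (1 : ℂ) - γ j ≠ 0 := by
    intro j hj h0
    have hg1 : γ j = 1 := by linear_combination -h0
    have := habs j hj
    rw [hg1] at this
    simp at this
  have hprod : ∀ k, k ≤ n → ∏ j ∈ Finset.range k, (1 - γ j) = aSeq α k := by
    intro k hk
    induction k with
    | zero => simp [aSeq]
    | succ k ih =>
      have ihk := ih (by omega)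
      rw [Finset.prod_range_succ, ihk]
      rw [show aSeq α (k+1) = aSeq α k -
        (starRingEnd ℂ) (α k) * (starRingEnd ℂ) (aSeq α k) from rfl]
      have hconj : (starRingEnd ℂ) (aSeq α k)
          = ∏ j ∈ Finset.range k, (1 - starRingEnd ℂ (γ j)) := by
        rw [← ihk, map_prod]
        exact Finset.prod_congr rfl (fun j _ => by simp [map_sub])
      have hP : (∏ j ∈ Finset.range k, (1 - γ j)) ≠ 0 :=
        Finset.prod_ne_zero_iff.mpr
          (fun j hj => hne j (by have := Finset.mem_range.mp hj; omega))
      rw [hγ k (by omega), Finset.prod_div_distrib, ← hconj, ← ihk]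
      field_simp
  have main : Matrix.det (1 - cmvMatrix n α) = ∏ j ∈ Finset.range n, (1 - γ j) := by
    rw [hdetEq, hprod n le_rfl]
  refine ⟨main, ?_⟩
  rw [main, map_prod]
  exact Finset.prod_congr rfl (fun j _ => by simp [map_sub])
end
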